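/- arXiv:1910.13549 — 3 statements merged into one kernel-verified Lean document; each statement's English description precedes it below -/
import Mathlib

section
/- Let n ≥ 3 and let L ⊆ {1, …, n}. Work in ℝ[x_1, …, x_n, (y_ℓ)_{ℓ∈L}], with z_ℓ = x_ℓ + y_ℓ for ℓ ∈ L and z_ℓ = x_ℓ otherwise. Consider the n+1 polynomials: e_m(z_1, …, z_n) for m = 1, …, n−1; e_n(z_1, …, z_n) − x_1 x_2 ⋯ x_n; and κ := x_1 x_2 ⋯ x_{n−1}, where e_m denotes the m-th elementary symmetric polynomial in the listed arguments. Then the Jacobian matrix of this family with respect to the n+|L| variables, viewed over the field of rational functions in those variables, has rank n+|L| if and only if |L| ≤ 1. -/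
open Finset MvPolynomial

noncomputable def esymOn {σ R : Type*} [CommSemiring R] (s : Finset σ) (m : ℕ) (v : σ → R) : R :=
  ∑ t ∈ Finset.powersetCard m s, ∏ i ∈ t, v i


noncomputable def z12 (n : ℕ) (L : Finset (Fin n)) (ℓ : Fin n) :
    MvPolynomial (Fin n ⊕ {i : Fin n // i ∈ L}) ℝ :=
  X (Sum.inl ℓ) + if h : ℓ ∈ L then X (Sum.inr ⟨ℓ, h⟩) else 0

noncomputable def coeffs12 (n : ℕ) (L : Finset (Fin n)) (m : Fin (n + 1)) :
    MvPolynomial (Fin n ⊕ {i : Fin n // i ∈ L}) ℝ :=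
  if m.1 < n - 1 then esymOn Finset.univ (m.1 + 1) (z12 n L)
  else if m.1 = n - 1 then
    esymOn Finset.univ n (z12 n L) - ∏ i : Fin n, X (Sum.inl i)
  else ∏ i ∈ Finset.univ.filter (fun i : Fin n => i.1 < n - 1), X (Sum.inl i)

namespace Stmt12Aux
set_option maxHeartbeats 1000000

set_option linter.unusedSectionVars false

variable {ι : Type*} [DecidableEq ι] {K : Type*} [CommRing K]

lemma esymOn_zero (s : Finset ι) (v : ι → K) : esymOn s 0 v = 1 := by
  simp [esymOn]

lemma esymOn_eq_zero {s : Finset ι} {m : ℕ} (h : s.card < m) (v : ι → K) :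
    esymOn s m v = 0 := by
  rw [esymOn, Finset.powersetCard_eq_empty.2 h, Finset.sum_empty]

lemma esymOn_insert {a : ι} {s : Finset ι} (ha : a ∉ s) (m : ℕ) (v : ι → K) :
    esymOn (insert a s) (m + 1) v = esymOn s (m + 1) v + v a * esymOn s m v := by
  rw [esymOn, Finset.powersetCard_succ_insert ha, Finset.sum_union]
  · congr 1
    rw [Finset.sum_image, esymOn, Finset.mul_sum]
    · refine Finset.sum_congr rfl fun t ht => ?_
      have hat : a ∉ t := fun hmem => ha ((Finset.mem_powersetCard.1 ht).1 hmem)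
      rw [Finset.prod_insert hat]
    · intro x hx y hy hxy
      have hax : a ∉ x := fun hmem => ha ((Finset.mem_powersetCard.1 hx).1 hmem)
      have hay : a ∉ y := fun hmem => ha ((Finset.mem_powersetCard.1 hy).1 hmem)
      rw [← Finset.erase_insert hax, ← Finset.erase_insert hay, hxy]
  · rw [Finset.disjoint_left]
    intro t ht ht'
    obtain ⟨u, _, rfl⟩ := Finset.mem_image.1 ht'
    exact ha ((Finset.mem_powersetCard.1 ht).1 (Finset.mem_insert_self a u))

lemma prod_sub_esymOn (s : Finset ι) (v : ι → K) (T : K) :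
    ∏ i ∈ s, (T - v i)
      = ∑ m ∈ Finset.range (s.card + 1), (-1 : K) ^ m * esymOn s m v * T ^ (s.card - m) := by
  induction s using Finset.induction_on with
  | empty => simp [esymOn_zero]
  | @insert a s ha ih =>
    rw [Finset.prod_insert ha, ih, Finset.card_insert_of_notMem ha]
    set c := s.card with hc
    have TP : T * (∑ m ∈ Finset.range (c + 1), (-1 : K) ^ m * esymOn s m v * T ^ (c - m))
        = T ^ (c + 1) + ∑ k ∈ Finset.range c,
            (-1 : K) ^ (k + 1) * esymOn s (k + 1) v * T ^ (c - k) := by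
      rw [Finset.mul_sum, Finset.sum_range_succ'
        (fun m => T * ((-1 : K) ^ m * esymOn s m v * T ^ (c - m)))]
      rw [add_comm]
      congr 1
      · simp [esymOn_zero, pow_succ]; ring
      · refine Finset.sum_congr rfl fun k hk => ?_
        have hk' : k < c := Finset.mem_range.1 hk
        have hT : T * T ^ (c - (k + 1)) = T ^ (c - k) := by
          rw [← pow_succ']
          congr 1
          omega
        calc T * ((-1 : K) ^ (k + 1) * esymOn s (k + 1) v * T ^ (c - (k + 1)))
            = (-1 : K) ^ (k + 1) * esymOn s (k + 1) v * (T * T ^ (c - (k + 1))) := by ring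
          _ = _ := by rw [hT]
    have step1 : ∑ m ∈ Finset.range (c + 1 + 1),
          (-1 : K) ^ m * esymOn (insert a s) m v * T ^ (c + 1 - m)
        = ∑ k ∈ Finset.range (c + 1),
            (-1 : K) ^ (k + 1) * (esymOn s (k + 1) v + v a * esymOn s k v) * T ^ (c - k)
          + T ^ (c + 1) := by
      rw [Finset.sum_range_succ'
        (fun m => (-1 : K) ^ m * esymOn (insert a s) m v * T ^ (c + 1 - m))]
      simp only [esymOn_zero, pow_zero, one_mul, Nat.sub_zero, Nat.succ_sub_succ]
      congr 1
      refine Finset.sum_congr rfl fun k _ => ?_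
      rw [esymOn_insert ha]
    have step2 : ∑ k ∈ Finset.range (c + 1),
          (-1 : K) ^ (k + 1) * (esymOn s (k + 1) v + v a * esymOn s k v) * T ^ (c - k)
        = ∑ k ∈ Finset.range (c + 1), ((-1 : K) ^ (k + 1) * esymOn s (k + 1) v * T ^ (c - k)
            + (- v a) * ((-1 : K) ^ k * esymOn s k v * T ^ (c - k))) :=
      Finset.sum_congr rfl fun k _ => by ring
    have step3 : ∑ k ∈ Finset.range (c + 1),
          (-1 : K) ^ (k + 1) * esymOn s (k + 1) v * T ^ (c - k)
        = ∑ k ∈ Finset.range c, (-1 : K) ^ (k + 1) * esymOn s (k + 1) v * T ^ (c - k) := by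
      rw [Finset.sum_range_succ, esymOn_eq_zero (Nat.lt_succ_self c) v]
      ring
    rw [step1, step2, Finset.sum_add_distrib, step3, ← Finset.mul_sum]
    linear_combination TP

lemma sum_powersetCard_erase {s : Finset ι} {j : ι} (hj : j ∈ s) (m : ℕ) (g : ι → K) :
    ∑ t ∈ Finset.powersetCard (m + 1) s, (if j ∈ t then ∏ i ∈ t.erase j, g i else 0)
      = esymOn (s.erase j) m g := by
  rw [esymOn, Finset.sum_ite, Finset.sum_const_zero, add_zero]
  refine Finset.sum_bij' (fun t _ => t.erase j) (fun u _ => insert j u) ?_ ?_ ?_ ?_ ?_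
  · intro t ht
    rw [Finset.mem_filter, Finset.mem_powersetCard] at ht
    rw [Finset.mem_powersetCard]
    refine ⟨Finset.erase_subset_erase j ht.1.1, ?_⟩
    rw [Finset.card_erase_of_mem ht.2, ht.1.2]
    omega
  · intro u hu
    rw [Finset.mem_powersetCard] at hu
    have hju : j ∉ u := fun h => (Finset.mem_erase.1 (hu.1 h)).1 rfl
    rw [Finset.mem_filter, Finset.mem_powersetCard]
    refine ⟨⟨Finset.insert_subset hj (hu.1.trans (Finset.erase_subset _ _)), ?_⟩,
      Finset.mem_insert_self _ _⟩
    rw [Finset.card_insert_of_notMem hju, hu.2]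
  · intro t ht
    rw [Finset.mem_filter] at ht
    exact Finset.insert_erase ht.2
  · intro u hu
    rw [Finset.mem_powersetCard] at hu
    have hju : j ∉ u := fun h => (Finset.mem_erase.1 (hu.1 h)).1 rfl
    exact Finset.erase_insert hju
  · intro t _
    rfl

lemma pderiv_finset_prod {σ : Type*} {R : Type*} [CommSemiring R] (c : σ) {ι' : Type*}
    [DecidableEq ι'] (t : Finset ι') (f : ι' → MvPolynomial σ R) :
    pderiv c (∏ i ∈ t, f i) = ∑ i ∈ t, pderiv c (f i) * ∏ k ∈ t.erase i, f k := by
  induction t using Finset.induction_on with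
  | empty => simp
  | @insert a s ha ih =>
    rw [Finset.prod_insert ha, pderiv_mul, ih, Finset.sum_insert ha, Finset.erase_insert ha]
    congr 1
    rw [Finset.mul_sum]
    refine Finset.sum_congr rfl fun i hi => ?_
    have hia : i ≠ a := fun h => ha (h ▸ hi)
    rw [Finset.erase_insert_of_ne hia.symm, Finset.prod_insert
      (fun h => ha ((Finset.erase_subset _ _) h))]
    ring



section FieldLemmas

variable {F : Type*} [Field F]

lemma lag_sum {n : ℕ} (hn : 0 < n) (w : Fin n → F) (hw : Function.Injective w) :
    ∑ j : Fin n, (∏ k ∈ Finset.univ.erase j, (w j - w k))⁻¹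
        * ∏ k ∈ Finset.univ.erase j, (-w k) = 1 := by
  haveI : Nonempty (Fin n) := ⟨⟨0, hn⟩⟩
  have h := Lagrange.sum_basis (s := (Finset.univ : Finset (Fin n))) (v := w)
    (hw.injOn) Finset.univ_nonempty
  have h0 := congrArg (Polynomial.eval 0) h
  rw [Polynomial.eval_finset_sum, Polynomial.eval_one] at h0
  rw [← h0]
  refine Finset.sum_congr rfl fun j _ => ?_
  rw [Lagrange.basis, Polynomial.eval_prod, ← Finset.prod_inv_distrib, ← Finset.prod_mul_distrib]
  refine Finset.prod_congr rfl fun k _ => ?_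
  rw [Lagrange.basisDivisor, Polynomial.eval_mul, Polynomial.eval_C, Polynomial.eval_sub,
    Polynomial.eval_X, Polynomial.eval_C, zero_sub]

/-- key linear-algebra step: if the first `n-1` "elementary symmetric" linear
combinations of `a` vanish, then `a i` is proportional to the inverse Vandermonde factor. -/
lemma key_comb {n : ℕ} (hn : 0 < n) (w : Fin n → F) (hw : Function.Injective w)
    (a : Fin n → F)
    (h : ∀ m : ℕ, m < n - 1 → ∑ j : Fin n, esymOn (Finset.univ.erase j) m w * a j = 0)
    (i : Fin n) :
    a i * ∏ l ∈ Finset.univ.erase i, (w i - w l)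
      = (-1 : F) ^ (n - 1) * ∑ j : Fin n, esymOn (Finset.univ.erase j) (n - 1) w * a j := by
  have hcard : ∀ j : Fin n, (Finset.univ.erase j).card = n - 1 := fun j => by
    rw [Finset.card_erase_of_mem (Finset.mem_univ j), Finset.card_univ, Fintype.card_fin]
  have hrange : Finset.range n = Finset.range ((n - 1) + 1) := by
    congr 1
    omega
  have hβ : ∑ m ∈ Finset.range n, (-1 : F) ^ m * (w i) ^ (n - 1 - m)
        * (∑ j : Fin n, esymOn (Finset.univ.erase j) m w * a j)
      = (-1 : F) ^ (n - 1) * ∑ j : Fin n, esymOn (Finset.univ.erase j) (n - 1) w * a j := by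
    rw [hrange, Finset.sum_range_succ]
    rw [Finset.sum_eq_zero fun m hm => by
      rw [h m (by have := Finset.mem_range.1 hm; omega), mul_zero]]
    rw [zero_add, Nat.sub_self, pow_zero, mul_one]
  have hα : ∑ m ∈ Finset.range n, (-1 : F) ^ m * (w i) ^ (n - 1 - m)
        * (∑ j : Fin n, esymOn (Finset.univ.erase j) m w * a j)
      = a i * ∏ l ∈ Finset.univ.erase i, (w i - w l) := by
    have inner : ∀ j : Fin n, (∑ m ∈ Finset.range n,
          (-1 : F) ^ m * esymOn (Finset.univ.erase j) m w * (w i) ^ (n - 1 - m))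
        = ∏ l ∈ Finset.univ.erase j, (w i - w l) := by
      intro j
      rw [prod_sub_esymOn (Finset.univ.erase j) w (w i), hcard j, ← hrange]
    calc ∑ m ∈ Finset.range n, (-1 : F) ^ m * (w i) ^ (n - 1 - m)
          * (∑ j : Fin n, esymOn (Finset.univ.erase j) m w * a j)
        = ∑ m ∈ Finset.range n, ∑ j : Fin n, (-1 : F) ^ m * (w i) ^ (n - 1 - m)
            * (esymOn (Finset.univ.erase j) m w * a j) :=
          Finset.sum_congr rfl fun m _ => Finset.mul_sum _ _ _
      _ = ∑ j : Fin n, ∑ m ∈ Finset.range n, (-1 : F) ^ m * (w i) ^ (n - 1 - m)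
            * (esymOn (Finset.univ.erase j) m w * a j) := Finset.sum_comm
      _ = ∑ j : Fin n, (∑ m ∈ Finset.range n,
            (-1 : F) ^ m * esymOn (Finset.univ.erase j) m w * (w i) ^ (n - 1 - m)) * a j := by
          refine Finset.sum_congr rfl fun j _ => ?_
          rw [Finset.sum_mul]
          exact Finset.sum_congr rfl fun m _ => by ring
      _ = ∑ j : Fin n, (∏ l ∈ Finset.univ.erase j, (w i - w l)) * a j :=
          Finset.sum_congr rfl fun j _ => by rw [inner j]
      _ = (∏ l ∈ Finset.univ.erase i, (w i - w l)) * a i := by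
          refine Finset.sum_eq_single i (fun j _ hji => ?_) (fun hi => absurd (Finset.mem_univ i) hi)
          rw [Finset.prod_eq_zero (Finset.mem_erase.2 ⟨hji.symm, Finset.mem_univ i⟩) (sub_self (w i)),
            zero_mul]
      _ = a i * ∏ l ∈ Finset.univ.erase i, (w i - w l) := mul_comm _ _
  rw [← hα, hβ]

/-- The master nonvanishing sum. -/
lemma Astar_ne {n : ℕ} (hn : 3 ≤ n) (x w : Fin n → F) (lastF : Fin n)
    (hxw : ∀ j, j ≠ lastF → w j = x j)
    (hw : Function.Injective w)
    (hstar : (-1 : F) ^ (n - 1) * ∏ l ∈ Finset.univ.erase lastF, (w lastF - w l)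
              ≠ ∏ l ∈ Finset.univ.erase lastF, x l)
    (hwlast : w lastF ≠ 0) :
    ∑ j ∈ Finset.univ.erase lastF,
        (∏ i ∈ (Finset.univ.erase lastF).erase j, x i)
          * (∏ l ∈ Finset.univ.erase j, (w j - w l))⁻¹ ≠ 0 := by
  have hD : ∀ j : Fin n, (∏ l ∈ Finset.univ.erase j, (w j - w l)) ≠ 0 := by
    intro j
    rw [Finset.prod_ne_zero_iff]
    intro l hl
    exact sub_ne_zero_of_ne fun he => (Finset.mem_erase.1 hl).1 (hw he.symm)
  have hprodneg : ∀ j : Fin n, ∏ k ∈ Finset.univ.erase j, (-w k)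
      = (-1 : F) ^ (n - 1) * ∏ k ∈ Finset.univ.erase j, w k := by
    intro j
    rw [Finset.prod_congr rfl (fun k _ => (neg_one_mul (w k)).symm), Finset.prod_mul_distrib,
      Finset.prod_const, Finset.card_erase_of_mem (Finset.mem_univ j), Finset.card_univ,
      Fintype.card_fin]
  have hlag := lag_sum (by omega : 0 < n) w hw
  rw [← Finset.add_sum_erase _ _ (Finset.mem_univ lastF)] at hlag
  have hterm : ∀ j ∈ Finset.univ.erase lastF,
      (∏ k ∈ Finset.univ.erase j, (w j - w k))⁻¹ * ∏ k ∈ Finset.univ.erase j, (-w k)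
      = ((-1 : F) ^ (n - 1) * w lastF) *
          ((∏ i ∈ (Finset.univ.erase lastF).erase j, x i)
            * (∏ l ∈ Finset.univ.erase j, (w j - w l))⁻¹) := by
    intro j hj
    have hjne : j ≠ lastF := (Finset.mem_erase.1 hj).1
    have hlmem : lastF ∈ Finset.univ.erase j :=
      Finset.mem_erase.2 ⟨hjne.symm, Finset.mem_univ _⟩
    have hwprod : ∏ k ∈ Finset.univ.erase j, w k
        = w lastF * ∏ k ∈ (Finset.univ.erase lastF).erase j, x k := by
      rw [← Finset.mul_prod_erase (Finset.univ.erase j) w hlmem, Finset.erase_right_comm]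
      congr 1
      exact Finset.prod_congr rfl fun k hk => hxw k (Finset.mem_erase.1
        ((Finset.erase_subset _ _) hk)).1
    rw [hprodneg j, hwprod]
    ring
  rw [Finset.sum_congr rfl hterm, ← Finset.mul_sum] at hlag
  intro hA0
  rw [hA0, mul_zero, add_zero, hprodneg lastF] at hlag
  have hxlast : ∏ k ∈ Finset.univ.erase lastF, w k = ∏ k ∈ Finset.univ.erase lastF, x k :=
    Finset.prod_congr rfl fun k hk => hxw k (Finset.mem_erase.1 hk).1
  rw [hxlast] at hlag
  have hDlast := hD lastF
  have h2 : (-1 : F) ^ (n - 1) * ∏ k ∈ Finset.univ.erase lastF, x k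
      = ∏ l ∈ Finset.univ.erase lastF, (w lastF - w l) := by
    field_simp at hlag
    linear_combination hlag
  have hsq : (-1 : F) ^ (n - 1) * (-1 : F) ^ (n - 1) = 1 := by
    rw [← pow_add]
    exact Even.neg_one_pow ⟨n - 1, rfl⟩
  apply hstar
  rw [← h2, ← mul_assoc, hsq, one_mul]

end FieldLemmas

/-! ### infrastructure -/

abbrev Rn (n : ℕ) (L : Finset (Fin n)) := MvPolynomial (Fin n ⊕ {i : Fin n // i ∈ L}) ℝ
abbrev Fn (n : ℕ) (L : Finset (Fin n)) := FractionRing (Rn n L)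

def jdx {n : ℕ} {L : Finset (Fin n)} : (Fin n ⊕ {i : Fin n // i ∈ L}) → Fin n :=
  Sum.elim id Subtype.val

lemma esymOn_map {ι K K' : Type*} [CommSemiring K] [CommSemiring K'] (h : K →+* K')
    (s : Finset ι) (m : ℕ) (v : ι → K) :
    h (esymOn s m v) = esymOn s m (fun i => h (v i)) := by
  rw [esymOn, map_sum]
  exact Finset.sum_congr rfl fun t _ => by rw [map_prod]

section WithNL
variable {n : ℕ} {L : Finset (Fin n)}

lemma pderiv_z12 (c : Fin n ⊕ {i : Fin n // i ∈ L}) (ℓ : Fin n) :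
    pderiv c (z12 n L ℓ) = if ℓ = jdx c then 1 else 0 := by
  classical
  rw [z12, map_add, apply_dite (pderiv c), map_zero]
  cases c with
  | inl j =>
    have h2 : (if h : ℓ ∈ L then pderiv (Sum.inl j : Fin n ⊕ {i : Fin n // i ∈ L})
        (X (Sum.inr ⟨ℓ, h⟩)) else (0 : Rn n L)) = 0 := by
      split
      · exact pderiv_X_of_ne (by simp)
      · rfl
    rw [h2, add_zero, pderiv_X, Pi.single_apply, jdx, Sum.elim_inl, id_eq]
    simp [Sum.inl.injEq]
  | inr u =>
    rw [pderiv_X_of_ne (by simp), zero_add, jdx, Sum.elim_inr]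
    by_cases h : ℓ ∈ L
    · rw [dif_pos h, pderiv_X, Pi.single_apply]
      have heq : ((Sum.inr ⟨ℓ, h⟩ : Fin n ⊕ {i : Fin n // i ∈ L}) = Sum.inr u) ↔ ℓ = u.1 := by
        rw [Sum.inr.injEq, Subtype.ext_iff]
      simp only [heq]
    · rw [dif_neg h]
      have : ℓ ≠ u.1 := fun he => h (he ▸ u.2)
      rw [if_neg this]

lemma pderiv_esymOn_univ (c : Fin n ⊕ {i : Fin n // i ∈ L}) (m : ℕ) (hm : 1 ≤ m) :
    pderiv c (esymOn Finset.univ m (z12 n L))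
      = esymOn (Finset.univ.erase (jdx c)) (m - 1) (z12 n L) := by
  classical
  obtain ⟨m, rfl⟩ : ∃ m', m = m' + 1 := ⟨m - 1, by omega⟩
  rw [esymOn, map_sum, Nat.add_sub_cancel]
  have hterm : ∀ t ∈ Finset.powersetCard (m + 1) (Finset.univ : Finset (Fin n)),
      pderiv c (∏ i ∈ t, z12 n L i)
        = (if jdx c ∈ t then ∏ i ∈ t.erase (jdx c), z12 n L i else 0) := by
    intro t _
    rw [pderiv_finset_prod]
    rw [Finset.sum_congr rfl (fun i _ => by
      rw [pderiv_z12 c i, ite_mul, one_mul, zero_mul])]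
    exact Finset.sum_ite_eq' t (jdx c) _
  rw [Finset.sum_congr rfl hterm, sum_powersetCard_erase (Finset.mem_univ (jdx c))]

lemma pderiv_prodX (c : Fin n ⊕ {i : Fin n // i ∈ L}) (s : Finset (Fin n)) :
    pderiv c (∏ i ∈ s, (X (Sum.inl i) : Rn n L))
      = Sum.elim (fun j => if j ∈ s then ∏ i ∈ s.erase j, (X (Sum.inl i) : Rn n L) else 0)
          (fun _ => 0) c := by
  classical
  rw [pderiv_finset_prod]
  cases c with
  | inl j =>
    rw [Sum.elim_inl]
    rw [Finset.sum_congr rfl (fun i _ => by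
      rw [show pderiv (Sum.inl j : Fin n ⊕ {i : Fin n // i ∈ L}) (X (Sum.inl i) : Rn n L)
          = if i = j then 1 else 0 from by
        rw [pderiv_X, Pi.single_apply]
        simp [Sum.inl.injEq], ite_mul, one_mul, zero_mul])]
    exact Finset.sum_ite_eq' s j _
  | inr u =>
    rw [Sum.elim_inr]
    exact Finset.sum_eq_zero fun i _ => by rw [pderiv_X_of_ne (by simp), zero_mul]

lemma filt_eq (hn : 1 ≤ n) :
    Finset.univ.filter (fun i : Fin n => i.1 < n - 1) = Finset.univ.erase ⟨n - 1, by omega⟩ := by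
  ext i
  simp only [Finset.mem_filter, Finset.mem_erase, Finset.mem_univ, true_and, and_true]
  have h2 := i.2
  have hval : ((⟨n - 1, by omega⟩ : Fin n) : ℕ) = n - 1 := rfl
  constructor
  · intro h
    intro he
    rw [Fin.ext_iff, hval] at he
    omega
  · intro h
    rcases Nat.lt_or_ge i.1 (n - 1) with h3 | h3
    · exact h3
    · exact absurd (Fin.ext (by rw [hval]; omega : i.1 = ((⟨n - 1, by omega⟩ : Fin n) : ℕ))) h

lemma entry_lt {m : Fin (n + 1)} (hm : m.1 < n - 1) (c : Fin n ⊕ {i : Fin n // i ∈ L}) :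
    algebraMap (Rn n L) (Fn n L) (pderiv c (coeffs12 n L m))
      = esymOn (Finset.univ.erase (jdx c)) m.1 (fun i => algebraMap (Rn n L) (Fn n L) (z12 n L i)) := by
  rw [coeffs12, if_pos hm, pderiv_esymOn_univ c (m.1 + 1) (by omega), Nat.add_sub_cancel,
    esymOn_map]

lemma entry_eqn (hn : 1 ≤ n) {m : Fin (n + 1)} (hm1 : ¬ m.1 < n - 1) (hm2 : m.1 = n - 1)
    (c : Fin n ⊕ {i : Fin n // i ∈ L}) :
    algebraMap (Rn n L) (Fn n L) (pderiv c (coeffs12 n L m))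
      = esymOn (Finset.univ.erase (jdx c)) (n - 1)
          (fun i => algebraMap (Rn n L) (Fn n L) (z12 n L i))
        - Sum.elim (fun j => ∏ i ∈ Finset.univ.erase j,
            algebraMap (Rn n L) (Fn n L) (X (Sum.inl i))) (fun _ => 0) c := by
  rw [coeffs12, if_neg hm1, if_pos hm2, map_sub, map_sub, pderiv_esymOn_univ c n (by omega),
    esymOn_map]
  congr 1
  rw [pderiv_prodX]
  cases c with
  | inl j =>
    rw [Sum.elim_inl, Sum.elim_inl, if_pos (Finset.mem_univ j), map_prod]
  | inr u =>
    rw [Sum.elim_inr, Sum.elim_inr, map_zero]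

lemma entry_top (hn : 1 ≤ n) {m : Fin (n + 1)} (hm1 : ¬ m.1 < n - 1) (hm2 : ¬ m.1 = n - 1)
    (c : Fin n ⊕ {i : Fin n // i ∈ L}) :
    algebraMap (Rn n L) (Fn n L) (pderiv c (coeffs12 n L m))
      = Sum.elim (fun j => if j ∈ Finset.univ.erase (⟨n - 1, by omega⟩ : Fin n) then
            ∏ i ∈ (Finset.univ.erase (⟨n - 1, by omega⟩ : Fin n)).erase j,
              algebraMap (Rn n L) (Fn n L) (X (Sum.inl i)) else 0)
          (fun _ => 0) c := by
  rw [coeffs12, if_neg hm1, if_neg hm2, filt_eq hn, pderiv_prodX]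
  cases c with
  | inl j =>
    rw [Sum.elim_inl, Sum.elim_inl, apply_ite (algebraMap (Rn n L) (Fn n L)), map_prod, map_zero]
  | inr u =>
    rw [Sum.elim_inr, Sum.elim_inr, map_zero]

lemma phi_ne_zero (r : Rn n L) (p : (Fin n ⊕ {i : Fin n // i ∈ L}) → ℝ)
    (h : MvPolynomial.eval p r ≠ 0) :
    algebraMap (Rn n L) (Fn n L) r ≠ 0 := by
  intro h0
  apply h
  have hinj := IsFractionRing.injective (Rn n L) (Fn n L)
  have hr : r = 0 := hinj (by rw [h0, map_zero])
  rw [hr, map_zero]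

lemma eval_z12 (p : (Fin n ⊕ {i : Fin n // i ∈ L}) → ℝ) (ℓ : Fin n) :
    MvPolynomial.eval p (z12 n L ℓ)
      = p (Sum.inl ℓ) + (if h : ℓ ∈ L then p (Sum.inr ⟨ℓ, h⟩) else 0) := by
  rw [z12, map_add, apply_dite (MvPolynomial.eval p), map_zero, eval_X]
  congr 1
  split
  · rw [eval_X]
  · rfl

end WithNL

lemma rank_submatrix_rows_le {Fq : Type*} [Field Fq] {m l o : Type*} [Fintype m] [Fintype l]
    [Fintype o] [DecidableEq m] [DecidableEq l] [DecidableEq o]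
    (A : Matrix m o Fq) (f : l → m) : (A.submatrix f id).rank ≤ A.rank := by
  have hfac : A.submatrix f id
      = (Matrix.of fun (i : l) (j : m) => if f i = j then (1 : Fq) else 0) * A := by
    ext i c
    rw [Matrix.mul_apply]
    simp only [Matrix.of_apply, ite_mul, one_mul, zero_mul, Matrix.submatrix_apply, id_eq]
    rw [Finset.sum_ite_eq (Finset.univ) (f i) (fun j => A j c), if_pos (Finset.mem_univ _)]
  rw [hfac]
  exact Matrix.rank_mul_le_right _ _


section Case0

lemma case0_rank {n : ℕ} (hn : 3 ≤ n) (L : Finset (Fin n)) (hL : L = ∅) :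
    (n : ℕ) + L.card ≤ (Matrix.of fun (m : Fin (n + 1)) (v : Fin n ⊕ {i : Fin n // i ∈ L}) =>
        algebraMap (MvPolynomial (Fin n ⊕ {i : Fin n // i ∈ L}) ℝ)
          (FractionRing (MvPolynomial (Fin n ⊕ {i : Fin n // i ∈ L}) ℝ))
          (pderiv v (coeffs12 n L m))).rank := by
  classical
  subst hL
  haveI hie : IsEmpty {i : Fin n // i ∈ (∅ : Finset (Fin n))} :=
    Finset.isEmpty_coe_sort.2 rfl
  set lastF : Fin n := ⟨n - 1, by omega⟩ with hlastF
  set x : Fin n → Fn n ∅ := fun i => algebraMap (Rn n ∅) (Fn n ∅) (X (Sum.inl i)) with hxdef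
  set A : Matrix (Fin (n + 1)) (Fin n ⊕ {i : Fin n // i ∈ (∅ : Finset (Fin n))}) (Fn n ∅) :=
    Matrix.of fun (m : Fin (n + 1)) (v : Fin n ⊕ {i : Fin n // i ∈ (∅ : Finset (Fin n))}) =>
      algebraMap (Rn n ∅) (Fn n ∅) (pderiv v (coeffs12 n ∅ m)) with hAdef
  set re : (Fin n ⊕ {i : Fin n // i ∈ (∅ : Finset (Fin n))}) → Fin (n + 1) :=
    Sum.elim (fun j => if j.1 < n - 1 then (⟨j.1, by omega⟩ : Fin (n + 1)) else ⟨n, by omega⟩)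
      (fun _ => ⟨n, by omega⟩) with hre_def
  -- basic nonvanishing facts
  have hx0 : ∀ i, x i ≠ 0 := fun i => phi_ne_zero _ (fun _ => 1) (by simp)
  have hxne : ∀ i j : Fin n, i ≠ j → x i ≠ x j := by
    intro i j hij
    have h := phi_ne_zero (L := (∅ : Finset (Fin n))) (X (Sum.inl i) - X (Sum.inl j))
      (fun c => if c = Sum.inl i then 1 else 0) (by
        rw [map_sub, eval_X, eval_X, if_pos rfl,
          if_neg (by simp only [Sum.inl.injEq]; exact fun h => hij h.symm)]
        norm_num)
    rw [map_sub] at h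
    exact fun he => h (sub_eq_zero.2 he)
  have hxinj : Function.Injective x := fun i j h => by
    by_contra hne
    exact hxne i j hne h
  have hD : ∀ j : Fin n, (∏ l ∈ Finset.univ.erase j, (x j - x l)) ≠ 0 := by
    intro j
    rw [Finset.prod_ne_zero_iff]
    exact fun l hl => sub_ne_zero_of_ne (hxne j l fun he => (Finset.mem_erase.1 hl).1 he.symm)
  have hmem0 : (⟨0, by omega⟩ : Fin n) ∈ Finset.univ.erase lastF := by
    refine Finset.mem_erase.2 ⟨?_, Finset.mem_univ _⟩
    rw [Ne, Fin.ext_iff]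
    simp only [hlastF]
    omega
  have hstar3 : (-1 : Fn n ∅) ^ (n - 1) * ∏ l ∈ Finset.univ.erase lastF, (x lastF - x l)
      ≠ ∏ l ∈ Finset.univ.erase lastF, x l := by
    intro heq
    have h := phi_ne_zero (L := (∅ : Finset (Fin n)))
      ((-1) ^ (n - 1) * ∏ l ∈ Finset.univ.erase lastF, (X (Sum.inl lastF) - X (Sum.inl l))
        - ∏ l ∈ Finset.univ.erase lastF, X (Sum.inl l))
      (fun c : Fin n ⊕ {i : Fin n // i ∈ (∅ : Finset (Fin n))} =>
        if c = Sum.inl lastF then 1 else 0) ?_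
    · apply h
      rw [map_sub, map_mul, map_pow, map_neg, map_one, map_prod, map_prod]
      rw [sub_eq_zero]
      calc (-1 : Fn n ∅) ^ (n - 1) * ∏ l ∈ Finset.univ.erase lastF,
            (algebraMap (Rn n ∅) (Fn n ∅) (X (Sum.inl lastF) - X (Sum.inl l)))
          = (-1 : Fn n ∅) ^ (n - 1) * ∏ l ∈ Finset.univ.erase lastF, (x lastF - x l) := by
            rw [Finset.prod_congr rfl fun l _ => map_sub _ _ _]
        _ = ∏ l ∈ Finset.univ.erase lastF, x l := heq
    · rw [map_sub, map_mul, map_pow, map_neg, map_one, map_prod, map_prod]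
      have h1 : ∀ l ∈ Finset.univ.erase lastF,
          MvPolynomial.eval (fun c : Fin n ⊕ {i : Fin n // i ∈ (∅ : Finset (Fin n))} =>
            if c = Sum.inl lastF then (1 : ℝ) else 0)
            (X (Sum.inl lastF) - X (Sum.inl l)) = 1 := by
        intro l hl
        rw [map_sub, eval_X, eval_X, if_pos rfl, if_neg (by
          simp only [Sum.inl.injEq]
          exact (Finset.mem_erase.1 hl).1)]
        norm_num
      have h2 : ∀ l ∈ Finset.univ.erase lastF,
          MvPolynomial.eval (fun c : Fin n ⊕ {i : Fin n // i ∈ (∅ : Finset (Fin n))} =>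
            if c = Sum.inl lastF then (1 : ℝ) else 0)
            (X (Sum.inl l) : Rn n ∅) = 0 := by
        intro l hl
        rw [eval_X, if_neg (by
          simp only [Sum.inl.injEq]
          exact (Finset.mem_erase.1 hl).1)]
      rw [Finset.prod_congr rfl h1, Finset.prod_const_one, mul_one,
        Finset.prod_eq_zero hmem0 (h2 _ hmem0), sub_zero]
      exact pow_ne_zero _ (by norm_num)
  have hz : ∀ j, algebraMap (Rn n ∅) (Fn n ∅) (z12 n ∅ j) = x j := by
    intro j
    rw [z12, dif_neg (Finset.notMem_empty j), add_zero]
  -- determinant of submatrix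
  set S : Matrix (Fin n ⊕ {i : Fin n // i ∈ (∅ : Finset (Fin n))})
      (Fin n ⊕ {i : Fin n // i ∈ (∅ : Finset (Fin n))}) (Fn n ∅) := A.submatrix re id with hSdef
  have hdet : S.det ≠ 0 := by
    intro h0
    obtain ⟨v, hv0, hvM⟩ := Matrix.exists_mulVec_eq_zero_iff.2 h0
    have hrow : ∀ r, (∑ c, algebraMap (Rn n ∅) (Fn n ∅)
        (pderiv c (coeffs12 n ∅ (re r))) * v c) = 0 := by
      intro r
      have h := congrFun hvM r
      simpa [S, A, Matrix.mulVec, dotProduct, Matrix.submatrix_apply] using h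
    have hEm : ∀ m : ℕ, m < n - 1 →
        ∑ j : Fin n, esymOn (Finset.univ.erase j) m x * v (Sum.inl j) = 0 := by
      intro m hm
      have hmn : m < n := by omega
      have h1 := hrow (Sum.inl (⟨m, hmn⟩ : Fin n))
      have hrelt : (re (Sum.inl (⟨m, hmn⟩ : Fin n))).1 < n - 1 := by
        rw [hre_def]
        simp only [Sum.elim_inl]
        rw [if_pos (show ((⟨m, hmn⟩ : Fin n) : ℕ) < n - 1 from hm)]
        exact hm
      rw [Finset.sum_congr rfl (fun c _ => by rw [entry_lt hrelt c])] at h1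
      have hreval : (re (Sum.inl (⟨m, hmn⟩ : Fin n))).1 = m := by
        rw [hre_def]
        simp only [Sum.elim_inl]
        rw [if_pos (show ((⟨m, hmn⟩ : Fin n) : ℕ) < n - 1 from hm)]
      rw [hreval] at h1
      rw [show (fun i => algebraMap (Rn n ∅) (Fn n ∅) (z12 n ∅ i)) = x from funext hz] at h1
      rw [Fintype.sum_sum_type] at h1
      simpa [jdx] using h1
    have hkey := key_comb (show 0 < n by omega) x hxinj (fun j => v (Sum.inl j)) hEm
    set t := ∑ j : Fin n, esymOn (Finset.univ.erase j) (n - 1) x * v (Sum.inl j) with htdef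
    have hvj : ∀ j, v (Sum.inl j) = ((-1 : Fn n ∅) ^ (n - 1) * t)
        * (∏ l ∈ Finset.univ.erase j, (x j - x l))⁻¹ := by
      intro j
      have h : v (Sum.inl j) * ∏ l ∈ Finset.univ.erase j, (x j - x l)
          = (-1 : Fn n ∅) ^ (n - 1) * t := hkey j
      rw [← h, mul_assoc, mul_inv_cancel₀ (hD j), mul_one]
    have hEκ : ∑ j ∈ Finset.univ.erase lastF,
        (∏ i ∈ (Finset.univ.erase lastF).erase j, x i) * v (Sum.inl j) = 0 := by
      have h1 := hrow (Sum.inl lastF)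
      have hcond : ¬ ((lastF : ℕ) < n - 1) := show ¬ (n - 1 < n - 1) by omega
      have hne1 : ¬ ((re (Sum.inl lastF)).1 < n - 1) := by
        rw [hre_def]
        simp only [Sum.elim_inl]
        rw [if_neg hcond]
        exact show ¬ (n < n - 1) by omega
      have hne2 : ¬ ((re (Sum.inl lastF)).1 = n - 1) := by
        rw [hre_def]
        simp only [Sum.elim_inl]
        rw [if_neg hcond]
        exact show ¬ (n = n - 1) by omega
      rw [Finset.sum_congr rfl (fun c _ => by rw [entry_top (by omega) hne1 hne2 c])] at h1
      rw [Fintype.sum_sum_type] at h1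
      simp only [Finset.univ_eq_empty, Finset.sum_empty, add_zero, Sum.elim_inl,
        ite_mul, zero_mul] at h1
      rw [Finset.sum_ite_mem, Finset.univ_inter] at h1
      exact h1
    have hAs := Astar_ne hn x x lastF (fun _ _ => rfl) hxinj hstar3 (hx0 lastF)
    have hfinal : ((-1 : Fn n ∅) ^ (n - 1) * t) * (∑ j ∈ Finset.univ.erase lastF,
        (∏ i ∈ (Finset.univ.erase lastF).erase j, x i)
          * (∏ l ∈ Finset.univ.erase j, (x j - x l))⁻¹) = 0 := by
      rw [Finset.mul_sum, ← hEκ]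
      exact Finset.sum_congr rfl fun j _ => by rw [hvj j]; ring
    have ht0 : (-1 : Fn n ∅) ^ (n - 1) * t = 0 := by
      rcases mul_eq_zero.1 hfinal with h | h
      · exact h
      · exact absurd h hAs
    apply hv0
    funext c
    cases c with
    | inl j =>
      have h := hvj j
      rw [ht0, zero_mul] at h
      exact h
    | inr u => exact isEmptyElim u
  have hrankS : S.rank = Fintype.card (Fin n ⊕ {i : Fin n // i ∈ (∅ : Finset (Fin n))}) :=
    Matrix.rank_of_isUnit S ((Matrix.isUnit_iff_isUnit_det S).2 (isUnit_iff_ne_zero.2 hdet))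
  have hcard : Fintype.card (Fin n ⊕ {i : Fin n // i ∈ (∅ : Finset (Fin n))})
      = n + (∅ : Finset (Fin n)).card := by
    rw [Fintype.card_sum, Fintype.card_fin, Fintype.card_coe]
  have hle := rank_submatrix_rows_le A re
  rw [hSdef] at hrankS
  omega

end Case0

section Case1

lemma case1_rank {n : ℕ} (hn : 3 ≤ n) (L : Finset (Fin n)) (ℓ0 : Fin n) (hL : L = {ℓ0}) :
    (n : ℕ) + L.card ≤ (Matrix.of fun (m : Fin (n + 1)) (v : Fin n ⊕ {i : Fin n // i ∈ L}) =>
        algebraMap (MvPolynomial (Fin n ⊕ {i : Fin n // i ∈ L}) ℝ)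
          (FractionRing (MvPolynomial (Fin n ⊕ {i : Fin n // i ∈ L}) ℝ))
          (pderiv v (coeffs12 n L m))).rank := by
  classical
  subst hL
  set lastF : Fin n := ⟨n - 1, by omega⟩ with hlastF
  set u0 : {i : Fin n // i ∈ ({ℓ0} : Finset (Fin n))} := ⟨ℓ0, Finset.mem_singleton_self ℓ0⟩
    with hu0def
  have husub : ∀ u : {i : Fin n // i ∈ ({ℓ0} : Finset (Fin n))}, u = u0 :=
    fun u => Subtype.ext (Finset.mem_singleton.1 u.2)
  set x : Fin n → Fn n {ℓ0} :=
    fun i => algebraMap (Rn n {ℓ0}) (Fn n {ℓ0}) (X (Sum.inl i)) with hxdef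
  set z : Fin n → Fn n {ℓ0} :=
    fun i => algebraMap (Rn n {ℓ0}) (Fn n {ℓ0}) (z12 n {ℓ0} i) with hzdef
  set A : Matrix (Fin (n + 1)) (Fin n ⊕ {i : Fin n // i ∈ ({ℓ0} : Finset (Fin n))})
      (Fn n {ℓ0}) :=
    Matrix.of fun (m : Fin (n + 1)) (v : Fin n ⊕ {i : Fin n // i ∈ ({ℓ0} : Finset (Fin n))}) =>
      algebraMap (Rn n {ℓ0}) (Fn n {ℓ0}) (pderiv v (coeffs12 n {ℓ0} m)) with hAdef
  set re : (Fin n ⊕ {i : Fin n // i ∈ ({ℓ0} : Finset (Fin n))}) → Fin (n + 1) :=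
    Sum.elim (fun j => j.castSucc) (fun _ => Fin.last n) with hre_def
  -- basic facts about x
  have hx0 : ∀ i, x i ≠ 0 := fun i => phi_ne_zero _ (fun _ => 1) (by simp)
  have hxne : ∀ i j : Fin n, i ≠ j → x i ≠ x j := by
    intro i j hij
    have h := phi_ne_zero (L := ({ℓ0} : Finset (Fin n))) (X (Sum.inl i) - X (Sum.inl j))
      (fun c : Fin n ⊕ {i : Fin n // i ∈ ({ℓ0} : Finset (Fin n))} =>
        if c = Sum.inl i then 1 else 0) (by
        rw [map_sub, eval_X, eval_X, if_pos rfl,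
          if_neg (by simp only [Sum.inl.injEq]; exact fun h => hij h.symm)]
        norm_num)
    rw [map_sub] at h
    exact fun he => h (sub_eq_zero.2 he)
  have hxinj : Function.Injective x := fun i j h => by
    by_contra hne
    exact hxne i j hne h
  -- basic facts about z
  have hzne : ∀ i j : Fin n, i ≠ j → z i ≠ z j := by
    intro i j hij
    have h := phi_ne_zero (L := ({ℓ0} : Finset (Fin n))) (z12 n {ℓ0} i - z12 n {ℓ0} j)
      (fun c : Fin n ⊕ {i : Fin n // i ∈ ({ℓ0} : Finset (Fin n))} =>
        if c = Sum.inl i then 1 else 0) (by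
        rw [map_sub, eval_z12, eval_z12, if_pos rfl,
          if_neg (by simp only [Sum.inl.injEq]; exact fun h => hij h.symm)]
        have e1 : (if h : i ∈ ({ℓ0} : Finset (Fin n)) then
            (if (Sum.inr ⟨i, h⟩ : Fin n ⊕ {i : Fin n // i ∈ ({ℓ0} : Finset (Fin n))})
              = Sum.inl i then (1:ℝ) else 0) else 0) = 0 := by
          split
          · rw [if_neg (by simp)]
          · rfl
        have e2 : (if h : j ∈ ({ℓ0} : Finset (Fin n)) then
            (if (Sum.inr ⟨j, h⟩ : Fin n ⊕ {i : Fin n // i ∈ ({ℓ0} : Finset (Fin n))})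
              = Sum.inl i then (1:ℝ) else 0) else 0) = 0 := by
          split
          · rw [if_neg (by simp)]
          · rfl
        rw [e1, e2]
        norm_num)
    rw [map_sub] at h
    exact fun he => h (sub_eq_zero.2 he)
  have hzinj : Function.Injective z := fun i j h => by
    by_contra hne
    exact hzne i j hne h
  have hzx : ∀ j, j ≠ ℓ0 → z j = x j := by
    intro j hj
    rw [hzdef, hxdef]
    simp only []
    rw [z12, dif_neg (by rw [Finset.mem_singleton]; exact hj), add_zero]
  have hz0 : ∀ i, z i ≠ 0 := by
    intro i
    refine phi_ne_zero _ (fun c : Fin n ⊕ {i : Fin n // i ∈ ({ℓ0} : Finset (Fin n))} =>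
      Sum.elim (fun _ : Fin n => (1:ℝ))
        (fun _ : {i : Fin n // i ∈ ({ℓ0} : Finset (Fin n))} => 0) c) ?_
    rw [eval_z12]
    have : (if h : i ∈ ({ℓ0} : Finset (Fin n)) then
        Sum.elim (fun _ : Fin n => (1:ℝ)) (fun _ : {i : Fin n // i ∈ ({ℓ0} : Finset (Fin n))} => 0)
          ((Sum.inr ⟨i, h⟩ : Fin n ⊕ {i : Fin n // i ∈ ({ℓ0} : Finset (Fin n))})) else 0) = 0 := by
      split
      · rfl
      · rfl
    rw [this]
    norm_num
  have hδ : ∀ j : Fin n, (∏ l ∈ Finset.univ.erase j, (z j - z l)) ≠ 0 := by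
    intro j
    rw [Finset.prod_ne_zero_iff]
    exact fun l hl => sub_ne_zero_of_ne (hzne j l fun he => (Finset.mem_erase.1 hl).1 he.symm)
  have hDx : ∀ j : Fin n, (∏ l ∈ Finset.univ.erase j, (x j - x l)) ≠ 0 := by
    intro j
    rw [Finset.prod_ne_zero_iff]
    exact fun l hl => sub_ne_zero_of_ne (hxne j l fun he => (Finset.mem_erase.1 hl).1 he.symm)
  have hmem0 : (⟨0, by omega⟩ : Fin n) ∈ Finset.univ.erase lastF := by
    refine Finset.mem_erase.2 ⟨?_, Finset.mem_univ _⟩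
    rw [Ne, Fin.ext_iff]
    simp only [hlastF]
    omega
  have hstar3 : (-1 : Fn n {ℓ0}) ^ (n - 1) * ∏ l ∈ Finset.univ.erase lastF, (x lastF - x l)
      ≠ ∏ l ∈ Finset.univ.erase lastF, x l := by
    intro heq
    have h := phi_ne_zero (L := ({ℓ0} : Finset (Fin n)))
      ((-1) ^ (n - 1) * ∏ l ∈ Finset.univ.erase lastF, (X (Sum.inl lastF) - X (Sum.inl l))
        - ∏ l ∈ Finset.univ.erase lastF, X (Sum.inl l))
      (fun c : Fin n ⊕ {i : Fin n // i ∈ ({ℓ0} : Finset (Fin n))} =>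
        if c = Sum.inl lastF then 1 else 0) ?_
    · apply h
      rw [map_sub, map_mul, map_pow, map_neg, map_one, map_prod, map_prod]
      rw [sub_eq_zero]
      calc (-1 : Fn n {ℓ0}) ^ (n - 1) * ∏ l ∈ Finset.univ.erase lastF,
            (algebraMap (Rn n {ℓ0}) (Fn n {ℓ0}) (X (Sum.inl lastF) - X (Sum.inl l)))
          = (-1 : Fn n {ℓ0}) ^ (n - 1) * ∏ l ∈ Finset.univ.erase lastF, (x lastF - x l) := by
            rw [Finset.prod_congr rfl fun l _ => map_sub _ _ _]
        _ = ∏ l ∈ Finset.univ.erase lastF, x l := heq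
    · rw [map_sub, map_mul, map_pow, map_neg, map_one, map_prod, map_prod]
      have h1 : ∀ l ∈ Finset.univ.erase lastF,
          MvPolynomial.eval (fun c : Fin n ⊕ {i : Fin n // i ∈ ({ℓ0} : Finset (Fin n))} =>
            if c = Sum.inl lastF then (1 : ℝ) else 0)
            (X (Sum.inl lastF) - X (Sum.inl l)) = 1 := by
        intro l hl
        rw [map_sub, eval_X, eval_X, if_pos rfl, if_neg (by
          simp only [Sum.inl.injEq]
          exact (Finset.mem_erase.1 hl).1)]
        norm_num
      have h2 : ∀ l ∈ Finset.univ.erase lastF,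
          MvPolynomial.eval (fun c : Fin n ⊕ {i : Fin n // i ∈ ({ℓ0} : Finset (Fin n))} =>
            if c = Sum.inl lastF then (1 : ℝ) else 0)
            (X (Sum.inl l) : Rn n {ℓ0}) = 0 := by
        intro l hl
        rw [eval_X, if_neg (by
          simp only [Sum.inl.injEq]
          exact (Finset.mem_erase.1 hl).1)]
      rw [Finset.prod_congr rfl h1, Finset.prod_const_one, mul_one,
        Finset.prod_eq_zero hmem0 (h2 _ hmem0), sub_zero]
      exact pow_ne_zero _ (by norm_num)
  have hsq : (-1 : Fn n {ℓ0}) ^ (n - 1) * (-1 : Fn n {ℓ0}) ^ (n - 1) = 1 := by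
    rw [← pow_add]
    exact Even.neg_one_pow ⟨n - 1, rfl⟩
  have hzlast0 : z lastF ≠ 0 := hz0 lastF
  set S : Matrix (Fin n ⊕ {i : Fin n // i ∈ ({ℓ0} : Finset (Fin n))})
      (Fin n ⊕ {i : Fin n // i ∈ ({ℓ0} : Finset (Fin n))}) (Fn n {ℓ0}) :=
    A.submatrix re id with hSdef
  have hdet : S.det ≠ 0 := by
    intro h0
    obtain ⟨v, hv0, hvM⟩ := Matrix.exists_mulVec_eq_zero_iff.2 h0
    have hrow : ∀ r, (∑ c, algebraMap (Rn n {ℓ0}) (Fn n {ℓ0})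
        (pderiv c (coeffs12 n {ℓ0} (re r))) * v c) = 0 := by
      intro r
      have h := congrFun hvM r
      simpa [S, A, Matrix.mulVec, dotProduct, Matrix.submatrix_apply] using h
    set cy := v (Sum.inr u0) with hcydef
    set a : Fin n → Fn n {ℓ0} := fun j => v (Sum.inl j) + (if j = ℓ0 then cy else 0) with hadef
    have hrsum : ∀ g : Fin n → Fn n {ℓ0},
        (∑ c, g (jdx c) * v c) = ∑ j : Fin n, g j * a j := by
      intro g
      rw [Fintype.sum_sum_type]
      have hinr : (∑ u : {i : Fin n // i ∈ ({ℓ0} : Finset (Fin n))},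
          g (jdx (Sum.inr u)) * v (Sum.inr u)) = g ℓ0 * v (Sum.inr u0) := by
        rw [Fintype.sum_eq_single u0 (fun u hu => absurd (husub u) hu)]
        rfl
      rw [hinr]
      have hterm : ∀ j : Fin n, g j * a j
          = g j * v (Sum.inl j) + (if j = ℓ0 then g j * v (Sum.inr u0) else 0) := by
        intro j
        rw [hadef]
        simp only []
        rw [mul_add, mul_ite, mul_zero, hcydef]
      rw [Finset.sum_congr rfl fun j _ => hterm j, Finset.sum_add_distrib,
        Finset.sum_ite_eq' Finset.univ ℓ0 (fun j => g j * v (Sum.inr u0)),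
        if_pos (Finset.mem_univ _)]
      simp [jdx]
    have hEm : ∀ m : ℕ, m < n - 1 →
        ∑ j : Fin n, esymOn (Finset.univ.erase j) m z * a j = 0 := by
      intro m hm
      have hmn : m < n := by omega
      have h1 := hrow (Sum.inl (⟨m, hmn⟩ : Fin n))
      have hrelt : (re (Sum.inl (⟨m, hmn⟩ : Fin n))).1 < n - 1 := by
        rw [hre_def]
        simp only [Sum.elim_inl, Fin.coe_castSucc]
        exact hm
      rw [Finset.sum_congr rfl (fun c _ => by rw [entry_lt hrelt c])] at h1
      have hreval : (re (Sum.inl (⟨m, hmn⟩ : Fin n))).1 = m := by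
        rw [hre_def]
        simp only [Sum.elim_inl, Fin.coe_castSucc]
      rw [hreval, ← hzdef, hrsum (fun j => esymOn (Finset.univ.erase j) m z)] at h1
      exact h1
    set t := ∑ j : Fin n, esymOn (Finset.univ.erase j) (n - 1) z * a j with htdef
    have hkey := key_comb (show 0 < n by omega) z hzinj a hEm
    set u := (-1 : Fn n {ℓ0}) ^ (n - 1) * t with hudef
    have haj : ∀ j, a j = u * (∏ l ∈ Finset.univ.erase j, (z j - z l))⁻¹ := by
      intro j
      have h : a j * ∏ l ∈ Finset.univ.erase j, (z j - z l) = u := hkey j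
      rw [← h, mul_assoc, mul_inv_cancel₀ (hδ j), mul_one]
    have htu : t = (-1 : Fn n {ℓ0}) ^ (n - 1) * u := by
      rw [hudef, ← mul_assoc, hsq, one_mul]
    have hvinl : ∀ j, v (Sum.inl j) = a j - (if j = ℓ0 then cy else 0) := by
      intro j
      rw [hadef]
      simp only []
      ring
    have hEn : t = ∑ j : Fin n, (∏ i ∈ Finset.univ.erase j, x i) * v (Sum.inl j) := by
      have h1 := hrow (Sum.inl lastF)
      have hm1 : ¬ ((re (Sum.inl lastF)).1 < n - 1) := by
        rw [hre_def]
        simp only [Sum.elim_inl, Fin.coe_castSucc]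
        exact show ¬ (n - 1 < n - 1) by omega
      have hm2 : (re (Sum.inl lastF)).1 = n - 1 := by
        rw [hre_def]
        simp only [Sum.elim_inl, Fin.coe_castSucc]
        rfl
      rw [Finset.sum_congr rfl (fun c _ => by rw [entry_eqn (show 1 ≤ n by omega) hm1 hm2 c])] at h1
      rw [← hzdef] at h1
      rw [Finset.sum_congr rfl (fun c _ => sub_mul _ _ (v c)), Finset.sum_sub_distrib] at h1
      rw [hrsum (fun j => esymOn (Finset.univ.erase j) (n - 1) z)] at h1
      rw [Fintype.sum_sum_type] at h1
      simp only [Sum.elim_inl, Sum.elim_inr, zero_mul, Finset.sum_const_zero, add_zero] at h1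
      rw [← htdef] at h1
      have h2 := sub_eq_zero.1 h1
      rw [h2]
    have hEκ : ∑ j ∈ Finset.univ.erase lastF,
        (∏ i ∈ (Finset.univ.erase lastF).erase j, x i) * v (Sum.inl j) = 0 := by
      have h1 := hrow (Sum.inr u0)
      have hm1 : ¬ ((re (Sum.inr u0)).1 < n - 1) := by
        rw [hre_def]
        simp only [Sum.elim_inr, Fin.val_last]
        omega
      have hm2 : ¬ ((re (Sum.inr u0)).1 = n - 1) := by
        rw [hre_def]
        simp only [Sum.elim_inr, Fin.val_last]
        omega
      rw [Finset.sum_congr rfl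
        (fun c _ => by rw [entry_top (show 1 ≤ n by omega) hm1 hm2 c])] at h1
      rw [Fintype.sum_sum_type] at h1
      simp only [Sum.elim_inl, Sum.elim_inr, zero_mul, Finset.sum_const_zero, add_zero,
        ite_mul] at h1
      rw [Finset.sum_ite_mem, Finset.univ_inter] at h1
      exact h1
    -- the two final linear equations
    have hs1 : ∑ j : Fin n, (∏ i ∈ Finset.univ.erase j, x i) * v (Sum.inl j)
        = u * (∑ j : Fin n, (∏ i ∈ Finset.univ.erase j, x i)
            * (∏ l ∈ Finset.univ.erase j, (z j - z l))⁻¹)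
          - (∏ i ∈ Finset.univ.erase ℓ0, x i) * cy := by
      rw [Finset.mul_sum]
      have hterm : ∀ j : Fin n, (∏ i ∈ Finset.univ.erase j, x i) * v (Sum.inl j)
          = u * ((∏ i ∈ Finset.univ.erase j, x i)
              * (∏ l ∈ Finset.univ.erase j, (z j - z l))⁻¹)
            - (if j = ℓ0 then (∏ i ∈ Finset.univ.erase j, x i) * cy else 0) := by
        intro j
        rw [hvinl j, haj j]
        split_ifs with h
        · ring
        · ring
      rw [Finset.sum_congr rfl fun j _ => hterm j, Finset.sum_sub_distrib]
      congr 1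
      rw [Finset.sum_ite_eq' Finset.univ ℓ0
        (fun j => (∏ i ∈ Finset.univ.erase j, x i) * cy), if_pos (Finset.mem_univ _)]
    have hs2 : ∑ j ∈ Finset.univ.erase lastF,
        (∏ i ∈ (Finset.univ.erase lastF).erase j, x i) * v (Sum.inl j)
        = u * (∑ j ∈ Finset.univ.erase lastF, (∏ i ∈ (Finset.univ.erase lastF).erase j, x i)
            * (∏ l ∈ Finset.univ.erase j, (z j - z l))⁻¹)
          - (if ℓ0 ∈ Finset.univ.erase lastF then
              (∏ i ∈ (Finset.univ.erase lastF).erase ℓ0, x i) * cy else 0) := by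
      rw [Finset.mul_sum]
      have hterm : ∀ j ∈ Finset.univ.erase lastF,
          (∏ i ∈ (Finset.univ.erase lastF).erase j, x i) * v (Sum.inl j)
          = u * ((∏ i ∈ (Finset.univ.erase lastF).erase j, x i)
              * (∏ l ∈ Finset.univ.erase j, (z j - z l))⁻¹)
            - (if j = ℓ0 then (∏ i ∈ (Finset.univ.erase lastF).erase j, x i) * cy else 0) := by
        intro j _
        rw [hvinl j, haj j]
        split_ifs with h
        · ring
        · ring
      rw [Finset.sum_congr rfl hterm, Finset.sum_sub_distrib]
      congr 1
      rw [Finset.sum_ite_eq' (Finset.univ.erase lastF) ℓ0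
        (fun j => (∏ i ∈ (Finset.univ.erase lastF).erase j, x i) * cy)]
    have hp0 : ∀ j : Fin n, (∏ i ∈ Finset.univ.erase j, x i) ≠ 0 :=
      fun j => Finset.prod_ne_zero_iff.2 fun i _ => hx0 i
    have hκ0 : ∀ j : Fin n, (∏ i ∈ (Finset.univ.erase lastF).erase j, x i) ≠ 0 :=
      fun j => Finset.prod_ne_zero_iff.2 fun i _ => hx0 i
    have hEqI : (-1 : Fn n {ℓ0}) ^ (n - 1) * u
        - u * (∑ j : Fin n, (∏ i ∈ Finset.univ.erase j, x i)
            * (∏ l ∈ Finset.univ.erase j, (z j - z l))⁻¹)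
        + (∏ i ∈ Finset.univ.erase ℓ0, x i) * cy = 0 := by
      linear_combination hEn + hs1 - htu
    by_cases hcase : ℓ0 = lastF
    · -- leak in the last compartment
      have hnotmem : ℓ0 ∉ Finset.univ.erase lastF := by
        rw [hcase]
        exact Finset.notMem_erase _ _
      rw [if_neg hnotmem] at hs2
      have hEqII : u * (∑ j ∈ Finset.univ.erase lastF,
          (∏ i ∈ (Finset.univ.erase lastF).erase j, x i)
            * (∏ l ∈ Finset.univ.erase j, (z j - z l))⁻¹) = 0 := by
        linear_combination hEκ - hs2
      have hstar4 : (-1 : Fn n {ℓ0}) ^ (n - 1)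
          * ∏ l ∈ Finset.univ.erase lastF, (z lastF - z l)
          ≠ ∏ l ∈ Finset.univ.erase lastF, x l := by
        intro heq
        have hmemℓL : lastF ∈ ({ℓ0} : Finset (Fin n)) := by
          rw [Finset.mem_singleton, ← hcase]
        have h := phi_ne_zero (L := ({ℓ0} : Finset (Fin n)))
          ((-1) ^ (n - 1) * ∏ l ∈ Finset.univ.erase lastF, (z12 n {ℓ0} lastF - z12 n {ℓ0} l)
            - ∏ l ∈ Finset.univ.erase lastF, X (Sum.inl l))
          (fun c : Fin n ⊕ {i : Fin n // i ∈ ({ℓ0} : Finset (Fin n))} =>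
            Sum.elim (fun _ : Fin n => (0:ℝ))
              (fun _ : {i : Fin n // i ∈ ({ℓ0} : Finset (Fin n))} => 1) c) ?_
        · apply h
          rw [map_sub, map_mul, map_pow, map_neg, map_one, map_prod, map_prod]
          rw [sub_eq_zero]
          calc (-1 : Fn n {ℓ0}) ^ (n - 1) * ∏ l ∈ Finset.univ.erase lastF,
                (algebraMap (Rn n {ℓ0}) (Fn n {ℓ0}) (z12 n {ℓ0} lastF - z12 n {ℓ0} l))
              = (-1 : Fn n {ℓ0}) ^ (n - 1)
                  * ∏ l ∈ Finset.univ.erase lastF, (z lastF - z l) := by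
                rw [Finset.prod_congr rfl fun l _ => map_sub _ _ _]
            _ = ∏ l ∈ Finset.univ.erase lastF, x l := heq
        · rw [map_sub, map_mul, map_pow, map_neg, map_one, map_prod, map_prod]
          have hev : ∀ ℓ : Fin n, MvPolynomial.eval
              (fun c : Fin n ⊕ {i : Fin n // i ∈ ({ℓ0} : Finset (Fin n))} =>
                Sum.elim (fun _ : Fin n => (0:ℝ))
                  (fun _ : {i : Fin n // i ∈ ({ℓ0} : Finset (Fin n))} => 1) c)
              (z12 n {ℓ0} ℓ) = if ℓ ∈ ({ℓ0} : Finset (Fin n)) then 1 else 0 := by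
            intro ℓ
            rw [eval_z12]
            by_cases hq : ℓ ∈ ({ℓ0} : Finset (Fin n))
            · rw [dif_pos hq, if_pos hq, Sum.elim_inl, Sum.elim_inr, zero_add]
            · rw [dif_neg hq, if_neg hq, Sum.elim_inl, add_zero]
          have h1 : ∀ l ∈ Finset.univ.erase lastF,
              MvPolynomial.eval
                (fun c : Fin n ⊕ {i : Fin n // i ∈ ({ℓ0} : Finset (Fin n))} =>
                  Sum.elim (fun _ : Fin n => (0:ℝ))
                    (fun _ : {i : Fin n // i ∈ ({ℓ0} : Finset (Fin n))} => 1) c)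
                (z12 n {ℓ0} lastF - z12 n {ℓ0} l) = 1 := by
            intro l hl
            rw [map_sub, hev, hev, if_pos hmemℓL, if_neg (by
              rw [Finset.mem_singleton, hcase]
              exact (Finset.mem_erase.1 hl).1)]
            norm_num
          have h2 : MvPolynomial.eval
              (fun c : Fin n ⊕ {i : Fin n // i ∈ ({ℓ0} : Finset (Fin n))} =>
                Sum.elim (fun _ : Fin n => (0:ℝ))
                  (fun _ : {i : Fin n // i ∈ ({ℓ0} : Finset (Fin n))} => 1) c)
              (X (Sum.inl (⟨0, by omega⟩ : Fin n)) : Rn n {ℓ0}) = 0 := by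
            rw [eval_X, Sum.elim_inl]
          rw [Finset.prod_congr rfl h1, Finset.prod_const_one, mul_one,
            Finset.prod_eq_zero hmem0 h2, sub_zero]
          exact pow_ne_zero _ (by norm_num)
      have hCC := Astar_ne hn x z lastF
        (fun j hj => hzx j (by rw [hcase]; exact hj)) hzinj hstar4 hzlast0
      have hu0 : u = 0 := by
        rcases mul_eq_zero.1 hEqII with h | h
        · exact h
        · exact absurd h hCC
      have hcy0 : cy = 0 := by
        rw [hu0] at hEqI
        have h3 : (∏ i ∈ Finset.univ.erase ℓ0, x i) * cy = 0 := by linear_combination hEqI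
        rcases mul_eq_zero.1 h3 with h | h
        · exact absurd h (hp0 ℓ0)
        · exact h
      apply hv0
      funext c
      cases c with
      | inl j =>
        rw [Pi.zero_apply, hvinl j, haj j, hu0, zero_mul, zero_sub, neg_eq_zero]
        split_ifs
        · exact hcy0
        · rfl
      | inr uu =>
        rw [Pi.zero_apply, husub uu, ← hcydef]
        exact hcy0
    · -- leak not in the last compartment
      have hmemℓ : ℓ0 ∈ Finset.univ.erase lastF :=
        Finset.mem_erase.2 ⟨hcase, Finset.mem_univ _⟩
      rw [if_pos hmemℓ] at hs2
      have hEqII : u * (∑ j ∈ Finset.univ.erase lastF,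
          (∏ i ∈ (Finset.univ.erase lastF).erase j, x i)
            * (∏ l ∈ Finset.univ.erase j, (z j - z l))⁻¹)
          - (∏ i ∈ (Finset.univ.erase lastF).erase ℓ0, x i) * cy = 0 := by
        linear_combination hEκ - hs2
      -- R-level certificates for the 2x2 determinant
      set dR : Fin n → Rn n {ℓ0} :=
        fun k => ∏ l ∈ Finset.univ.erase k, (z12 n {ℓ0} k - z12 n {ℓ0} l) with hdRdef
      set dxR : Fin n → Rn n {ℓ0} :=
        fun k => ∏ l ∈ Finset.univ.erase k, (X (Sum.inl k) - X (Sum.inl l)) with hdxRdef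
      set pR : Fin n → Rn n {ℓ0} :=
        fun j => ∏ i ∈ Finset.univ.erase j, X (Sum.inl i) with hpRdef
      set κR : Fin n → Rn n {ℓ0} :=
        fun j => ∏ i ∈ (Finset.univ.erase lastF).erase j, X (Sum.inl i) with hκRdef
      have hφd : ∀ k, algebraMap (Rn n {ℓ0}) (Fn n {ℓ0}) (dR k)
          = ∏ l ∈ Finset.univ.erase k, (z k - z l) := by
        intro k
        rw [hdRdef]
        simp only []
        rw [map_prod]
        exact Finset.prod_congr rfl fun l _ => by rw [map_sub]
      have hφdx : ∀ k, algebraMap (Rn n {ℓ0}) (Fn n {ℓ0}) (dxR k)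
          = ∏ l ∈ Finset.univ.erase k, (x k - x l) := by
        intro k
        rw [hdxRdef]
        simp only []
        rw [map_prod]
        exact Finset.prod_congr rfl fun l _ => by rw [map_sub]
      have hφp : ∀ j, algebraMap (Rn n {ℓ0}) (Fn n {ℓ0}) (pR j)
          = ∏ i ∈ Finset.univ.erase j, x i := by
        intro j
        rw [hpRdef]
        simp only []
        rw [map_prod]
      have hφκ : ∀ j, algebraMap (Rn n {ℓ0}) (Fn n {ℓ0}) (κR j)
          = ∏ i ∈ (Finset.univ.erase lastF).erase j, x i := by
        intro j
        rw [hκRdef]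
        simp only []
        rw [map_prod]
      have hφprodE : ∀ j : Fin n, algebraMap (Rn n {ℓ0}) (Fn n {ℓ0})
          (∏ k ∈ Finset.univ.erase j, dR k)
          = (∏ l ∈ Finset.univ.erase j, (z j - z l))⁻¹
            * ∏ k : Fin n, ∏ l ∈ Finset.univ.erase k, (z k - z l) := by
        intro j
        rw [map_prod, Finset.prod_congr rfl fun k _ => hφd k,
          ← Finset.mul_prod_erase Finset.univ
            (fun k => ∏ l ∈ Finset.univ.erase k, (z k - z l)) (Finset.mem_univ j),
          ← mul_assoc, inv_mul_cancel₀ (hδ j), one_mul]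
      have hφprodEx : ∀ j : Fin n, algebraMap (Rn n {ℓ0}) (Fn n {ℓ0})
          (∏ k ∈ Finset.univ.erase j, dxR k)
          = (∏ l ∈ Finset.univ.erase j, (x j - x l))⁻¹
            * ∏ k : Fin n, ∏ l ∈ Finset.univ.erase k, (x k - x l) := by
        intro j
        rw [map_prod, Finset.prod_congr rfl fun k _ => hφdx k,
          ← Finset.mul_prod_erase Finset.univ
            (fun k => ∏ l ∈ Finset.univ.erase k, (x k - x l)) (Finset.mem_univ j),
          ← mul_assoc, inv_mul_cancel₀ (hDx j), one_mul]
      set ΔR : Rn n {ℓ0} := ∏ k : Fin n, dR k with hΔRdef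
      set BR : Rn n {ℓ0} := ∑ j : Fin n, pR j * ∏ k ∈ Finset.univ.erase j, dR k with hBRdef
      set CR : Rn n {ℓ0} :=
        ∑ j ∈ Finset.univ.erase lastF, κR j * ∏ k ∈ Finset.univ.erase j, dR k with hCRdef
      set NumR : Rn n {ℓ0} := κR ℓ0 * ((-1) ^ (n - 1) * ΔR - BR) + pR ℓ0 * CR with hNumdef
      have hΔφ : algebraMap (Rn n {ℓ0}) (Fn n {ℓ0}) ΔR
          = ∏ k : Fin n, ∏ l ∈ Finset.univ.erase k, (z k - z l) := by
        rw [hΔRdef, map_prod]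
        exact Finset.prod_congr rfl fun k _ => hφd k
      have hΔφ0 : algebraMap (Rn n {ℓ0}) (Fn n {ℓ0}) ΔR ≠ 0 := by
        rw [hΔφ]
        exact Finset.prod_ne_zero_iff.2 fun k _ => hδ k
      have hφB : algebraMap (Rn n {ℓ0}) (Fn n {ℓ0}) BR
          = (∑ j : Fin n, (∏ i ∈ Finset.univ.erase j, x i)
              * (∏ l ∈ Finset.univ.erase j, (z j - z l))⁻¹)
            * algebraMap (Rn n {ℓ0}) (Fn n {ℓ0}) ΔR := by
        rw [hBRdef, map_sum, hΔφ, Finset.sum_mul]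
        refine Finset.sum_congr rfl fun j _ => ?_
        rw [map_mul, hφprodE j, hφp j]
        ring
      have hφC : algebraMap (Rn n {ℓ0}) (Fn n {ℓ0}) CR
          = (∑ j ∈ Finset.univ.erase lastF, (∏ i ∈ (Finset.univ.erase lastF).erase j, x i)
              * (∏ l ∈ Finset.univ.erase j, (z j - z l))⁻¹)
            * algebraMap (Rn n {ℓ0}) (Fn n {ℓ0}) ΔR := by
        rw [hCRdef, map_sum, hΔφ, Finset.sum_mul]
        refine Finset.sum_congr rfl fun j _ => ?_
        rw [map_mul, hφprodE j, hφκ j]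
        ring
      have hφNum : algebraMap (Rn n {ℓ0}) (Fn n {ℓ0}) NumR
          = ((∏ i ∈ (Finset.univ.erase lastF).erase ℓ0, x i)
              * ((-1 : Fn n {ℓ0}) ^ (n - 1) - ∑ j : Fin n, (∏ i ∈ Finset.univ.erase j, x i)
                  * (∏ l ∈ Finset.univ.erase j, (z j - z l))⁻¹)
              + (∏ i ∈ Finset.univ.erase ℓ0, x i)
                * ∑ j ∈ Finset.univ.erase lastF,
                    (∏ i ∈ (Finset.univ.erase lastF).erase j, x i)
                      * (∏ l ∈ Finset.univ.erase j, (z j - z l))⁻¹)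
            * algebraMap (Rn n {ℓ0}) (Fn n {ℓ0}) ΔR := by
        rw [hNumdef, map_add, map_mul, map_mul, map_sub, map_mul, map_pow, map_neg, map_one,
          hφB, hφC, hφκ, hφp]
        ring
      -- specialization sending the leak variable to 0
      set ψ : Rn n {ℓ0} →ₐ[ℝ] Rn n {ℓ0} :=
        aeval (Sum.elim (fun i : Fin n => (X (Sum.inl i) : Rn n {ℓ0})) (fun _ => 0)) with hψdef
      have hψX : ∀ i, ψ (X (Sum.inl i)) = X (Sum.inl i) := by
        intro i
        rw [hψdef, aeval_X, Sum.elim_inl]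
      have hψz : ∀ j, ψ (z12 n {ℓ0} j) = X (Sum.inl j) := by
        intro j
        rw [z12, map_add, hψX]
        have h2 : (if h : j ∈ ({ℓ0} : Finset (Fin n)) then ψ (X (Sum.inr ⟨j, h⟩)) else ψ 0)
            = 0 := by
          split
          · rw [hψdef, aeval_X, Sum.elim_inr]
          · rw [map_zero]
        rw [apply_dite ψ, h2, add_zero]
      have hψd : ∀ k, ψ (dR k) = dxR k := by
        intro k
        rw [hdRdef, hdxRdef]
        simp only []
        rw [map_prod]
        exact Finset.prod_congr rfl fun l _ => by rw [map_sub, hψz, hψz]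
      have hψp : ∀ j, ψ (pR j) = pR j := by
        intro j
        rw [hpRdef]
        simp only []
        rw [map_prod]
        exact Finset.prod_congr rfl fun i _ => hψX i
      have hψκ : ∀ j, ψ (κR j) = κR j := by
        intro j
        rw [hκRdef]
        simp only []
        rw [map_prod]
        exact Finset.prod_congr rfl fun i _ => hψX i
      -- the x-specialized quantities
      have hBx : (∑ j : Fin n, (∏ i ∈ Finset.univ.erase j, x i)
          * (∏ l ∈ Finset.univ.erase j, (x j - x l))⁻¹) = (-1 : Fn n {ℓ0}) ^ (n - 1) := by
        have hlag := lag_sum (show 0 < n by omega) x hxinj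
        have hpn : ∀ j : Fin n, ∏ k ∈ Finset.univ.erase j, (-x k)
            = (-1 : Fn n {ℓ0}) ^ (n - 1) * ∏ k ∈ Finset.univ.erase j, x k := by
          intro j
          rw [Finset.prod_congr rfl fun k _ => (neg_one_mul (x k)).symm,
            Finset.prod_mul_distrib, Finset.prod_const,
            Finset.card_erase_of_mem (Finset.mem_univ j), Finset.card_univ, Fintype.card_fin]
        rw [Finset.sum_congr rfl fun j _ => by rw [hpn j]] at hlag
        have h2 : (-1 : Fn n {ℓ0}) ^ (n - 1)
            * ∑ j : Fin n, (∏ k ∈ Finset.univ.erase j, (x j - x k))⁻¹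
              * ((-1 : Fn n {ℓ0}) ^ (n - 1) * ∏ k ∈ Finset.univ.erase j, x k)
            = (-1 : Fn n {ℓ0}) ^ (n - 1) := by
          rw [hlag, mul_one]
        rw [Finset.mul_sum] at h2
        rw [← h2]
        refine Finset.sum_congr rfl fun j _ => ?_
        linear_combination (-(∏ l ∈ Finset.univ.erase j, (x j - x l))⁻¹
          * (∏ i ∈ Finset.univ.erase j, x i)) * hsq
      have hBxR0 : ((-1 : Rn n {ℓ0}) ^ (n - 1) * ∏ k : Fin n, dxR k
          - ∑ j : Fin n, pR j * ∏ k ∈ Finset.univ.erase j, dxR k) = 0 := by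
        have hinj := IsFractionRing.injective (Rn n {ℓ0}) (Fn n {ℓ0})
        apply hinj
        rw [map_zero, map_sub, map_mul, map_pow, map_neg, map_one, map_prod, map_sum]
        rw [Finset.prod_congr rfl fun k (_ : k ∈ Finset.univ) => hφdx k]
        rw [Finset.sum_congr rfl fun j (_ : j ∈ Finset.univ) => by
          rw [map_mul, hφprodEx j, hφp j]]
        have hrearr : ∑ j : Fin n, (∏ i ∈ Finset.univ.erase j, x i)
            * ((∏ l ∈ Finset.univ.erase j, (x j - x l))⁻¹
              * ∏ k : Fin n, ∏ l ∈ Finset.univ.erase k, (x k - x l))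
            = (∑ j : Fin n, (∏ i ∈ Finset.univ.erase j, x i)
                * (∏ l ∈ Finset.univ.erase j, (x j - x l))⁻¹)
              * ∏ k : Fin n, ∏ l ∈ Finset.univ.erase k, (x k - x l) := by
          rw [Finset.sum_mul]
          exact Finset.sum_congr rfl fun j _ => by ring
        rw [hrearr, hBx, sub_self]
      have hCxφ : algebraMap (Rn n {ℓ0}) (Fn n {ℓ0})
          (∑ j ∈ Finset.univ.erase lastF, κR j * ∏ k ∈ Finset.univ.erase j, dxR k)
          = (∑ j ∈ Finset.univ.erase lastF, (∏ i ∈ (Finset.univ.erase lastF).erase j, x i)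
              * (∏ l ∈ Finset.univ.erase j, (x j - x l))⁻¹)
            * ∏ k : Fin n, ∏ l ∈ Finset.univ.erase k, (x k - x l) := by
        rw [map_sum, Finset.sum_mul]
        refine Finset.sum_congr rfl fun j _ => ?_
        rw [map_mul, hφprodEx j, hφκ j]
        ring
      have hCx0 : (∑ j ∈ Finset.univ.erase lastF, κR j
          * ∏ k ∈ Finset.univ.erase j, dxR k) ≠ 0 := by
        intro h0
        have h1 := congrArg (algebraMap (Rn n {ℓ0}) (Fn n {ℓ0})) h0
        rw [map_zero, hCxφ] at h1
        rcases mul_eq_zero.1 h1 with h | h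
        · exact Astar_ne hn x x lastF (fun _ _ => rfl) hxinj hstar3 (hx0 lastF) h
        · exact (Finset.prod_ne_zero_iff.2 fun k _ => hDx k) h
      have hNum0 : NumR ≠ 0 := by
        intro h0
        have h1 := congrArg ψ h0
        rw [map_zero, hNumdef, map_add, map_mul, map_mul, map_sub, map_mul, map_pow, map_neg,
          map_one, hψκ, hψp] at h1
        rw [show ψ ΔR = ∏ k : Fin n, dxR k from by
          rw [hΔRdef, map_prod]; exact Finset.prod_congr rfl fun k _ => hψd k] at h1
        rw [show ψ BR = ∑ j : Fin n, pR j * ∏ k ∈ Finset.univ.erase j, dxR k from by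
          rw [hBRdef, map_sum]
          refine Finset.sum_congr rfl fun j _ => ?_
          rw [map_mul, hψp, map_prod]
          congr 1
          exact Finset.prod_congr rfl fun k _ => hψd k] at h1
        rw [show ψ CR = ∑ j ∈ Finset.univ.erase lastF, κR j
            * ∏ k ∈ Finset.univ.erase j, dxR k from by
          rw [hCRdef, map_sum]
          refine Finset.sum_congr rfl fun j _ => ?_
          rw [map_mul, hψκ, map_prod]
          congr 1
          exact Finset.prod_congr rfl fun k _ => hψd k] at h1
        rw [hBxR0, mul_zero, zero_add] at h1
        rcases mul_eq_zero.1 h1 with h | h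
        · exact (Finset.prod_ne_zero_iff.2 fun i _ =>
            (MvPolynomial.X_ne_zero _ : (X (Sum.inl i) : Rn n {ℓ0}) ≠ 0)) h
        · exact hCx0 h
      have hTheta : (∏ i ∈ (Finset.univ.erase lastF).erase ℓ0, x i)
          * ((-1 : Fn n {ℓ0}) ^ (n - 1) - ∑ j : Fin n, (∏ i ∈ Finset.univ.erase j, x i)
              * (∏ l ∈ Finset.univ.erase j, (z j - z l))⁻¹)
          + (∏ i ∈ Finset.univ.erase ℓ0, x i)
            * ∑ j ∈ Finset.univ.erase lastF, (∏ i ∈ (Finset.univ.erase lastF).erase j, x i)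
                * (∏ l ∈ Finset.univ.erase j, (z j - z l))⁻¹ ≠ 0 := by
        intro h0
        apply hNum0
        have hinj := IsFractionRing.injective (Rn n {ℓ0}) (Fn n {ℓ0})
        apply hinj
        rw [map_zero, hφNum, h0, zero_mul]
      have hu0 : u = 0 := by
        have hcomb : u * ((∏ i ∈ (Finset.univ.erase lastF).erase ℓ0, x i)
            * ((-1 : Fn n {ℓ0}) ^ (n - 1) - ∑ j : Fin n, (∏ i ∈ Finset.univ.erase j, x i)
                * (∏ l ∈ Finset.univ.erase j, (z j - z l))⁻¹)
            + (∏ i ∈ Finset.univ.erase ℓ0, x i)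
              * ∑ j ∈ Finset.univ.erase lastF,
                  (∏ i ∈ (Finset.univ.erase lastF).erase j, x i)
                    * (∏ l ∈ Finset.univ.erase j, (z j - z l))⁻¹) = 0 := by
          linear_combination (∏ i ∈ (Finset.univ.erase lastF).erase ℓ0, x i) * hEqI
            + (∏ i ∈ Finset.univ.erase ℓ0, x i) * hEqII
        rcases mul_eq_zero.1 hcomb with h | h
        · exact h
        · exact absurd h hTheta
      have hcy0 : cy = 0 := by
        rw [hu0, zero_mul, zero_sub, neg_eq_zero] at hEqII
        rcases mul_eq_zero.1 hEqII with h | h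
        · exact absurd h (hκ0 ℓ0)
        · exact h
      apply hv0
      funext c
      cases c with
      | inl j =>
        rw [Pi.zero_apply, hvinl j, haj j, hu0, zero_mul, zero_sub, neg_eq_zero]
        split_ifs
        · exact hcy0
        · rfl
      | inr uu =>
        rw [Pi.zero_apply, husub uu, ← hcydef]
        exact hcy0

  have hrankS : S.rank = Fintype.card (Fin n ⊕ {i : Fin n // i ∈ ({ℓ0} : Finset (Fin n))}) :=
    Matrix.rank_of_isUnit S ((Matrix.isUnit_iff_isUnit_det S).2 (isUnit_iff_ne_zero.2 hdet))
  have hcard : Fintype.card (Fin n ⊕ {i : Fin n // i ∈ ({ℓ0} : Finset (Fin n))})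
      = n + ({ℓ0} : Finset (Fin n)).card := by
    rw [Fintype.card_sum, Fintype.card_fin, Fintype.card_coe]
  have hle := rank_submatrix_rows_le A re
  rw [hSdef] at hrankS
  omega

end Case1

end Stmt12Aux

open Stmt12Aux in
/-- The cycle model with input in compartment `1`, output in compartment `n`, and leak set
`L` is generically locally identifiable iff `|L| ≤ 1`: the Jacobian of its coefficient map,
viewed over the field of rational functions in the `n + |L|` variables, has full rank
`n + |L|` if and only if `|L| ≤ 1`. -/
theorem stmt12 (n : ℕ) (hn : 3 ≤ n) (L : Finset (Fin n)) :
    (Matrix.of fun (m : Fin (n + 1)) (v : Fin n ⊕ {i : Fin n // i ∈ L}) =>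
        algebraMap (MvPolynomial (Fin n ⊕ {i : Fin n // i ∈ L}) ℝ)
          (FractionRing (MvPolynomial (Fin n ⊕ {i : Fin n // i ∈ L}) ℝ))
          (pderiv v (coeffs12 n L m))).rank = n + L.card ↔ L.card ≤ 1 := by
  classical
  set A := (Matrix.of fun (m : Fin (n + 1)) (v : Fin n ⊕ {i : Fin n // i ∈ L}) =>
        algebraMap (MvPolynomial (Fin n ⊕ {i : Fin n // i ∈ L}) ℝ)
          (FractionRing (MvPolynomial (Fin n ⊕ {i : Fin n // i ∈ L}) ℝ))
          (pderiv v (coeffs12 n L m))) with hA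
  have hW : A.rank ≤ n + L.card := by
    have h := Matrix.rank_le_card_width A
    rwa [Fintype.card_sum, Fintype.card_fin, Fintype.card_coe] at h
  have hH : A.rank ≤ n + 1 := by
    have h := Matrix.rank_le_card_height A
    rwa [Fintype.card_fin] at h
  rcases le_or_gt L.card 1 with hc | hc
  · refine iff_of_true ?_ hc
    refine le_antisymm hW ?_
    rcases Nat.le_one_iff_eq_zero_or_eq_one.mp hc with h0 | h1
    · exact case0_rank hn L (Finset.card_eq_zero.mp h0)
    · obtain ⟨ℓ0, hL⟩ := Finset.card_eq_one.mp h1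
      exact case1_rank hn L ℓ0 hL
  · exact iff_of_false (fun he => by omega) (by omega)
end

section
/- Let n ≥ 3. Work in the polynomial ring R = ℝ[a_1, …, a_n, b_2, …, b_{n−1}], and set K_ℓ = b_ℓ + a_ℓ for 2 ≤ ℓ ≤ n−1 and K_n = a_n. Let M be the n×n matrix over R[X] with first row (X + a_1, −b_2, −b_3, …, −b_{n−1}, −a_n), diagonal entries M_{ℓ,ℓ} = X + K_ℓ for 2 ≤ ℓ ≤ n, subdiagonal entries M_{ℓ+1,ℓ} = −a_ℓ for 1 ≤ ℓ ≤ n−1, and all other entries 0. Then: (i) det(M) = (X + a_1) · ∏_{ℓ=2}^n (X + K_ℓ) − ∑_{j=2}^n P_j · ∏_{i=j+1}^n (X + K_i), where P_j = b_j · a_1 a_2 ⋯ a_{j−1} for 2 ≤ j ≤ n−1 and P_n = a_n · a_1 a_2 ⋯ a_{n−1}; and (ii) the determinant of the submatrix of M obtained by deleting row 1 and column 1 equals ∏_{ℓ=2}^n (X + K_ℓ). -/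
open Finset MvPolynomial

/-- The map `Fin (n-1) → Fin n` that skips the index `r` (used to delete row/column `r`). -/
def delIdx (n r : ℕ) (k : Fin (n - 1)) : Fin n :=
  if k.1 < r then ⟨k.1, by have := k.isLt; omega⟩ else ⟨k.1 + 1, by have := k.isLt; omega⟩

/-- Variables of the Fin model: `Sum.inl i` is `a_{i+1}` (the cycle rate `k_{i+2,i+1}`,
indices mod `n`) and `Sum.inr t` is `b_{t+2}` (the incoming-edge rate `k_{1,t+2}`).
`d13 n r` (for 0-based `r`, i.e. 1-based compartment `r+1`) is the diagonal offset:
`K_{r+1} = b_{r+1} + a_{r+1}` for 1-based index in `2, …, n-1`, and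
`a_1` (resp. `aₙ`) for the first (resp. last) compartment. -/
noncomputable def d13 (n : ℕ) (r : Fin n) : MvPolynomial (Fin n ⊕ Fin (n - 2)) ℝ :=
  (if h : 1 ≤ r.1 ∧ r.1 < n - 1 then X (Sum.inr ⟨r.1 - 1, by omega⟩) else 0) + X (Sum.inl r)

/-- The matrix `X•I - A` of the `n`-compartment Fin model with no leaks, over
`(ℝ[a, b])[X]`: first row `(X + a₁, -b₂, …, -b_{n-1}, -aₙ)`, diagonal entries `X + K_ℓ`,
subdiagonal entries `-a_ℓ`, all other entries `0`. -/
noncomputable def M13 (n : ℕ) :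
    Matrix (Fin n) (Fin n) (Polynomial (MvPolynomial (Fin n ⊕ Fin (n - 2)) ℝ)) :=
  Matrix.of fun i j =>
    if i = j then Polynomial.X + Polynomial.C (d13 n j)
    else if i.1 = 0 then
      (if h : 1 ≤ j.1 ∧ j.1 < n - 1 then -Polynomial.C (X (R := ℝ) (σ := Fin n ⊕ Fin (n - 2)) (Sum.inr ⟨j.1 - 1, by omega⟩))
       else if j.1 = n - 1 then -Polynomial.C (X (R := ℝ) (σ := Fin n ⊕ Fin (n - 2)) (Sum.inl j)) else 0)
    else if i.1 = j.1 + 1 then -Polynomial.C (X (R := ℝ) (σ := Fin n ⊕ Fin (n - 2)) (Sum.inl j))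
    else 0

/-- `P_j = b_j · a₁ a₂ ⋯ a_{j-1}` for `2 ≤ j ≤ n-1`, and `P_n = aₙ · a₁ ⋯ a_{n-1}`
(1-based index `j`). -/
noncomputable def P13 (n : ℕ) (hn : 3 ≤ n) (j : ℕ) : MvPolynomial (Fin n ⊕ Fin (n - 2)) ℝ :=
  (if h : j < n then
      (if h2 : 2 ≤ j then X (Sum.inr ⟨j - 2, by omega⟩) else 0)
    else X (Sum.inl ⟨n - 1, by omega⟩)) *
    ∏ i ∈ Finset.univ.filter (fun i : Fin n => i.1 < j - 1), X (Sum.inl i)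

section Aux

variable {R : Type*} [CommRing R]

/-- Auxiliary matrix: first row `c`, diagonal `d`, subdiagonal `s`, zero elsewhere. -/
def auxNN (c d s : ℕ → R) (n : ℕ) : Matrix (Fin n) (Fin n) R :=
  Matrix.of fun i j =>
    if i.1 = 0 then c j.1 else if i = j then d j.1 else if i.1 = j.1 + 1 then s j.1 else 0

lemma auxTridet (c d s : ℕ → R) (n : ℕ) :
    (auxNN c d s (n+1)).det =
      ∑ j ∈ range (n+1), (-1)^j * c j * (∏ i ∈ range j, s i) * ∏ k ∈ Ioo j (n+1), d k := by
  induction n with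
  | zero =>
    simp [auxNN, Matrix.det_fin_one, show Ioo 0 1 = (∅ : Finset ℕ) from rfl]
  | succ m ih =>
    rw [show m + 1 + 1 = (m+1).succ from rfl,
      Matrix.det_succ_column (auxNN c d s (m+1).succ) (Fin.last (m+1))]
    rw [Fin.sum_univ_castSucc]
    rw [Finset.sum_eq_single_of_mem (0 : Fin (m+1)) (mem_univ _) (fun i _ hi => by
      have h1' : i.1 ≠ 0 := fun h => hi (Fin.ext h)
      have h4 : i.1 ≠ m + 1 + 1 := by have := i.isLt; omega
      have h2 : i.castSucc ≠ Fin.last (m+1) := by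
        intro h; have := congrArg Fin.val h; simp at this; have := i.isLt; omega
      have : (auxNN c d s (m+2)) i.castSucc (Fin.last (m+1)) = 0 := by
        simp [auxNN, h1', h2, h4, hi]
      rw [this]; ring)]
    have hS1 : (auxNN c d s (m+1).succ).submatrix (Fin.last (m+1)).succAbove
        (Fin.last (m+1)).succAbove = auxNN c d s (m+1) := by
      ext i j
      simp only [Fin.succAbove_last, Matrix.submatrix_apply, auxNN, Matrix.of_apply,
        Fin.coe_castSucc, Fin.castSucc_inj]
    have hS0 : ((auxNN c d s (m+1).succ).submatrix (Fin.succAbove 0)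
        (Fin.last (m+1)).succAbove).det = ∏ i ∈ range (m+1), s i := by
      rw [Matrix.det_of_upperTriangular]
      · rw [← Fin.prod_univ_eq_prod_range]
        refine Finset.prod_congr rfl fun i _ => ?_
        simp only [Fin.succAbove_last, Matrix.submatrix_apply, Fin.succAbove_zero, auxNN,
          Matrix.of_apply, Fin.val_succ, Fin.coe_castSucc]
        have h1 : i.1 + 1 ≠ 0 := by omega
        have h2 : i.succ ≠ i.castSucc := by
          intro h; have := congrArg Fin.val h; simp at this
        simp [h1, h2]
      · intro i j hij
        simp only [Fin.succAbove_last, Matrix.submatrix_apply, Fin.succAbove_zero, auxNN,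
          Matrix.of_apply, Fin.val_succ, Fin.coe_castSucc]
        have hij' : j.1 < i.1 := hij
        have h1 : i.1 + 1 ≠ 0 := by omega
        have h2 : i.succ ≠ j.castSucc := by
          intro h; have := congrArg Fin.val h; simp at this; omega
        have h3 : i.1 + 1 ≠ j.1 + 1 := by omega
        simp [h1, h2, h3, show i.1 ≠ j.1 by omega]
    rw [hS1, ih]
    simp only [Fin.castSucc_zero]
    rw [hS0]
    have e1 : (auxNN c d s (m+1).succ) 0 (Fin.last (m+1)) = c (m+1) := by simp [auxNN]
    have e2 : (auxNN c d s (m+1).succ) (Fin.last (m+1)) (Fin.last (m+1)) = d (m+1) := by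
      have : (Fin.last (m+1)).1 ≠ 0 := by simp
      simp [auxNN, this]
    rw [e1, e2]
    simp only [Nat.succ_eq_add_one]
    conv_rhs => rw [Finset.sum_range_succ]
    have hIoo : ∀ j, j < m + 1 → Ioo j (m+2) = insert (m+1) (Ioo j (m+1)) := by
      intro j hj; ext k; simp [mem_Ioo, mem_insert]; omega
    have : ∀ j ∈ range (m+1),
        (-1:R)^j * c j * (∏ i ∈ range j, s i) * ∏ k ∈ Ioo j (m+2), d k =
        d (m+1) * ((-1)^j * c j * (∏ i ∈ range j, s i) * ∏ k ∈ Ioo j (m+1), d k) := by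
      intro j hj
      rw [hIoo j (mem_range.mp hj), Finset.prod_insert (by simp)]
      ring
    rw [Finset.sum_congr rfl this, ← Finset.mul_sum]
    have : Ioo (m+1) (m+2) = (∅ : Finset ℕ) := by ext k; simp; omega
    rw [this]
    simp only [Fin.val_zero, Fin.val_last, prod_empty]
    ring_nf
    rw [show ((-1:R) ^ (m * 2)) = 1 by rw [show m*2 = 2*m by ring, pow_mul]; norm_num]
    ring

end Aux

noncomputable def aVar (n j : ℕ) : Polynomial (MvPolynomial (Fin n ⊕ Fin (n - 2)) ℝ) :=
  if h : j < n then Polynomial.C (X (Sum.inl ⟨j, h⟩)) else 0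

noncomputable def bVar (n j : ℕ) : Polynomial (MvPolynomial (Fin n ⊕ Fin (n - 2)) ℝ) :=
  if h : j < n - 2 then Polynomial.C (X (Sum.inr ⟨j, h⟩)) else 0

noncomputable def dVar (n j : ℕ) : Polynomial (MvPolynomial (Fin n ⊕ Fin (n - 2)) ℝ) :=
  if h : j < n then Polynomial.X + Polynomial.C (d13 n ⟨j, h⟩) else 0

noncomputable def cVar (n j : ℕ) : Polynomial (MvPolynomial (Fin n ⊕ Fin (n - 2)) ℝ) :=
  if j = 0 then dVar n 0 else if j < n - 1 then -(bVar n (j-1)) else -(aVar n (n-1))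

lemma hMeq (n : ℕ) (hn : 3 ≤ n) :
    M13 n = auxNN (cVar n) (dVar n) (fun j => -(aVar n j)) n := by
  have hn0 : 0 < n := by omega
  apply Matrix.ext
  intro i j
  simp only [M13, auxNN, Matrix.of_apply]
  by_cases h0 : i.1 = 0
  · by_cases hj0 : j.1 = 0
    · have hij : i = j := Fin.ext (by omega)
      have hj : (⟨0, hn0⟩ : Fin n) = j := Fin.ext hj0.symm
      rw [if_pos hij, if_pos h0]
      simp only [cVar]
      rw [if_pos hj0]
      simp only [dVar]
      rw [dif_pos hn0, hj]
    · have hij : i ≠ j := fun h => hj0 (by rw [← h]; exact h0)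
      rw [if_neg hij, if_pos h0]
      simp only [cVar, if_neg hj0]
      by_cases hlt : j.1 < n - 1
      · have h1 : 1 ≤ j.1 ∧ j.1 < n - 1 := ⟨by omega, hlt⟩
        rw [dif_pos h1, if_pos hlt]
        simp only [bVar]
        rw [dif_pos (show j.1 - 1 < n - 2 by omega), if_pos h0]
      · rw [dif_neg (by omega), if_neg hlt]
        by_cases hlast : j.1 = n - 1
        · have hj : (⟨n - 1, by omega⟩ : Fin n) = j := Fin.ext hlast.symm
          rw [if_pos hlast]
          simp only [aVar]
          rw [dif_pos (show n - 1 < n by omega), hj, if_pos h0]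
        · exact absurd j.isLt (by omega)
  · rw [if_neg h0]
    by_cases heq : i = j
    · rw [if_pos heq, if_pos heq]
      simp only [dVar]
      rw [dif_pos j.isLt, Fin.eta, if_neg h0]
    · rw [if_neg heq, if_neg heq]
      by_cases hsub : i.1 = j.1 + 1
      · rw [if_pos hsub, if_pos hsub]
        simp only [aVar]
        rw [dif_pos j.isLt, Fin.eta, if_neg h0]
      · rw [if_neg hsub, if_neg hsub, if_neg h0]

lemma hfilterProd (n t : ℕ) :
    (∏ r ∈ Finset.univ.filter (fun r : Fin n => t ≤ r.1),
      (Polynomial.X + Polynomial.C (d13 n r))) =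
    ∏ k ∈ (range n).filter (fun k => t ≤ k), dVar n k := by
  rw [Finset.prod_filter, Finset.prod_filter, ← Fin.prod_univ_eq_prod_range]
  refine Finset.prod_congr rfl fun r _ => ?_
  by_cases h : t ≤ r.1
  · rw [if_pos h, if_pos h, dVar, dif_pos r.isLt, Fin.eta]
  · rw [if_neg h, if_neg h]

lemma haProd (n j : ℕ) (hj : j ≤ n) :
    Polynomial.C (∏ i ∈ Finset.univ.filter (fun i : Fin n => i.1 < j), X (Sum.inl i)) =
      ∏ i ∈ range j, aVar n i := by
  rw [show range j = (range n).filter (fun k => k < j) by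
    ext k; simp only [mem_range, mem_filter]; omega]
  rw [Finset.prod_filter (fun k => k < j) (fun i => aVar n i)]
  rw [← Fin.prod_univ_eq_prod_range (fun k => if k < j then aVar n k else 1)]
  rw [map_prod, Finset.prod_filter]
  refine Finset.prod_congr rfl fun i _ => ?_
  by_cases h : i.1 < j
  · rw [if_pos h, if_pos h]
    simp only [aVar]
    rw [dif_pos i.isLt, Fin.eta]
  · rw [if_neg h, if_neg h]

/-- Determinant and `(1,1)`-minor for the Fin model:
(i) `det M = (X + a₁) ∏_{ℓ=2}^n (X + K_ℓ) - ∑_{j=2}^n P_j ∏_{i=j+1}^n (X + K_i)`, and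
(ii) the determinant of the submatrix of `M` obtained by deleting row `1` and column `1`
equals `∏_{ℓ=2}^n (X + K_ℓ)`. -/
theorem stmt13 (n : ℕ) (hn : 3 ≤ n) :
    (M13 n).det =
        (Polynomial.X + Polynomial.C (X (Sum.inl (⟨0, by omega⟩ : Fin n)))) *
          ∏ r ∈ Finset.univ.filter (fun r : Fin n => 1 ≤ r.1),
            (Polynomial.X + Polynomial.C (d13 n r)) -
        ∑ j ∈ Finset.Icc 2 n, Polynomial.C (P13 n hn j) *
          ∏ r ∈ Finset.univ.filter (fun r : Fin n => j ≤ r.1),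
            (Polynomial.X + Polynomial.C (d13 n r)) ∧
    ((M13 n).submatrix (delIdx n 0) (delIdx n 0)).det =
      ∏ r ∈ Finset.univ.filter (fun r : Fin n => 1 ≤ r.1),
        (Polynomial.X + Polynomial.C (d13 n r)) := by
  obtain ⟨m, rfl⟩ : ∃ m, n = m + 1 := ⟨n - 1, by omega⟩
  have hm : 2 ≤ m := by omega
  constructor
  · rw [hMeq _ hn, auxTridet, Finset.sum_range_succ']
    -- j = 0 term
    have hterm0 : (-1:Polynomial (MvPolynomial (Fin (m+1) ⊕ Fin (m+1-2)) ℝ))^0 * cVar (m+1) 0 *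
        (∏ i ∈ range 0, -(aVar (m+1) i)) * ∏ k ∈ Ioo 0 (m+1), dVar (m+1) k =
        (Polynomial.X + Polynomial.C (X (Sum.inl (⟨0, by omega⟩ : Fin (m+1))))) *
          ∏ r ∈ Finset.univ.filter (fun r : Fin (m+1) => 1 ≤ r.1),
            (Polynomial.X + Polynomial.C (d13 (m+1) r)) := by
      rw [hfilterProd]
      rw [show (range (m+1)).filter (fun k => 1 ≤ k) = Ioo 0 (m+1) by
        ext k; simp only [mem_filter, mem_range, mem_Ioo]; omega]
      simp only [pow_zero, prod_range_zero, one_mul, mul_one, cVar, if_pos rfl, dVar,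
        dif_pos (show 0 < m + 1 by omega)]
      congr 2
      simp [d13]
    rw [hterm0]
    -- the sum over Icc 2 (m+1)
    rw [show Finset.Icc 2 (m+1) =
        (range m).map ⟨fun x => x + 2, add_left_injective 2⟩ by
      ext k
      simp only [mem_Icc, Finset.mem_map, Function.Embedding.coeFn_mk, mem_range]
      constructor
      · rintro ⟨h1, h2⟩
        exact ⟨k - 2, by omega, show k - 2 + 2 = k by omega⟩
      · rintro ⟨b, hb, rfl⟩
        exact show 2 ≤ b + 2 ∧ b + 2 ≤ m + 1 by omega]
    rw [Finset.sum_map]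
    simp only [Function.Embedding.coeFn_mk]
    have hsum : ∀ x ∈ range m,
        (-1:Polynomial (MvPolynomial (Fin (m+1) ⊕ Fin (m+1-2)) ℝ))^(x+1) * cVar (m+1) (x+1) *
          (∏ i ∈ range (x+1), -(aVar (m+1) i)) * ∏ k ∈ Ioo (x+1) (m+1), dVar (m+1) k =
        -(Polynomial.C (P13 (m+1) hn (x+2)) *
          ∏ r ∈ Finset.univ.filter (fun r : Fin (m+1) => x + 2 ≤ r.1),
            (Polynomial.X + Polynomial.C (d13 (m+1) r))) := by
      intro x hx
      have hxm : x < m := mem_range.mp hx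
      rw [hfilterProd]
      rw [show (range (m+1)).filter (fun k => x + 2 ≤ k) = Ioo (x+1) (m+1) by
        ext k; simp only [mem_filter, mem_range, mem_Ioo]; omega]
      rw [show (∏ i ∈ range (x+1), -(aVar (m+1) i)) =
          (-1)^(x+1) * ∏ i ∈ range (x+1), aVar (m+1) i by
        rw [show (fun i => -(aVar (m+1) i)) = fun i => (-1) * aVar (m+1) i by
          funext i; ring]
        rw [Finset.prod_mul_distrib, Finset.prod_const, card_range]]
      rw [P13, map_mul]
      have h21 : x + 2 - 1 = x + 1 := by omega
      rw [h21, haProd _ _ (by omega)]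
      have hcc : cVar (m+1) (x+1) =
          -(Polynomial.C (R := MvPolynomial (Fin (m+1) ⊕ Fin (m+1-2)) ℝ) (if h : x + 2 < m + 1 then
              (if h2 : 2 ≤ x + 2 then X (Sum.inr (⟨x + 2 - 2, by omega⟩ : Fin (m+1-2))) else 0)
            else X (Sum.inl (⟨m + 1 - 1, by omega⟩ : Fin (m+1))))) := by
        rw [cVar, if_neg (by omega)]
        by_cases hlt : x + 2 < m + 1
        · rw [if_pos (by omega), dif_pos hlt, dif_pos (by omega), bVar,
            dif_pos (show x + 1 - 1 < m + 1 - 2 by omega)]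
          congr 3
        · rw [if_neg (by omega), dif_neg hlt, aVar,
            dif_pos (show m + 1 - 1 < m + 1 by omega)]
      rw [hcc]
      have hsq : ((-1:Polynomial (MvPolynomial (Fin (m+1) ⊕ Fin (m+1-2)) ℝ))^(x+1))^2 = 1 := by
        rw [← pow_mul, show (x+1)*2 = 2*(x+1) by ring, pow_mul]
        norm_num
      calc (-1)^(x+1) * -(Polynomial.C _) * ((-1)^(x+1) * ∏ i ∈ range (x+1), aVar (m+1) i) *
            ∏ k ∈ Ioo (x+1) (m+1), dVar (m+1) k
          = ((-1)^(x+1))^2 * (-(Polynomial.C _ * ((∏ i ∈ range (x+1), aVar (m+1) i) *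
              ∏ k ∈ Ioo (x+1) (m+1), dVar (m+1) k))) := by ring
        _ = _ := by rw [hsq]; ring
    rw [Finset.sum_congr rfl hsum, Finset.sum_neg_distrib]
    ring
  · -- part (ii)
    have hlow : ((M13 (m+1)).submatrix (delIdx (m+1) 0) (delIdx (m+1) 0)).det =
        ∏ i : Fin (m+1-1), (Polynomial.X + Polynomial.C (d13 (m+1) ⟨i.1+1, by
          have := i.isLt; omega⟩)) := by
      rw [Matrix.det_of_lowerTriangular]
      · refine Finset.prod_congr rfl fun i _ => ?_
        have hI : delIdx (m+1) 0 i = ⟨i.1+1, by have := i.isLt; omega⟩ := by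
          rw [delIdx, if_neg (by omega)]
        rw [Matrix.submatrix_apply, hI]
        simp [M13]
      · intro i j hij
        have hij' : (i:ℕ) < j := hij
        rw [Matrix.submatrix_apply, delIdx, delIdx, if_neg (by omega), if_neg (by omega)]
        have h1 : (⟨i.1+1, by have := i.isLt; omega⟩ : Fin (m+1)) ≠ ⟨j.1+1, by
            have := j.isLt; omega⟩ := by
          intro h; have := congrArg Fin.val h; simp at this; omega
        simp only [M13, Matrix.of_apply, if_neg h1]
        rw [if_neg (by simp), if_neg (by simp; omega)]
    rw [hlow, hfilterProd]
    rw [show (range (m+1)).filter (fun k => 1 ≤ k) = (range (m+1-1)).image (fun k => k + 1) by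
      ext k
      simp only [mem_filter, mem_range, mem_image]
      constructor
      · rintro ⟨h1, h2⟩; exact ⟨k - 1, by omega, by omega⟩
      · rintro ⟨b, hb, rfl⟩; omega]
    rw [Finset.prod_image (by intro a _ b _ h; simp only at h; omega)]
    rw [← Fin.prod_univ_eq_prod_range (fun k => dVar (m+1) (k+1))]
    refine Finset.prod_congr rfl fun i _ => ?_
    rw [dVar, dif_pos (by have := i.isLt; omega)]
end

section
/- Let n ≥ 4 and 3 ≤ j < ℓ ≤ n. Work in ℝ[x_2, …, x_n, u, w_j, w_ℓ] (n+2 variables), let e'_m denote the m-th elementary symmetric polynomial in x_2, …, x_n, let h_{ℓ−j} denote the (ℓ−j)-th elementary symmetric polynomial in x_2, …, x_{ℓ−1}, and set K̃ = u + w_j + w_ℓ, Q_ℓ = x_n · w_ℓ · (x_ℓ x_{ℓ+1} ⋯ x_{n−1}), and Q_j = x_n · w_j · (x_j x_{j+1} ⋯ x_{n−1}) (empty products being 1). Consider the n+2 polynomials: e'_1, e'_2, …, e'_{n−1}; e'_1 + K̃; e'_{n+2−ℓ} + e'_{n+1−ℓ} · K̃ − Q_ℓ; and e'_{n+2−j}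 + e'_{n+1−j} · K̃ − Q_ℓ · h_{ℓ−j} − Q_j. Then the determinant of the Jacobian matrix of these n+2 polynomials with respect to the n+2 variables is a nonzero polynomial; equivalently, the n+2 polynomials are algebraically independent over ℝ. -/
open Finset MvPolynomial

/-- Work in `ℝ[x₂, …, xₙ, u, w_j, w_ℓ]` (`n + 2` variables): `x_{t+2} = X ⟨t⟩` for
`t : Fin (n-1)`, `u = X ⟨n-1⟩`, `w_j = X ⟨n⟩`, `w_ℓ = X ⟨n+1⟩`. -/
noncomputable def x19 (n : ℕ) (t : Fin (n - 1)) : MvPolynomial (Fin (n + 2)) ℝ :=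
  X ⟨t.1, by have := t.isLt; omega⟩

/-- `e'_m`: the `m`-th elementary symmetric polynomial in `x₂, …, xₙ`. -/
noncomputable def e19 (n m : ℕ) : MvPolynomial (Fin (n + 2)) ℝ :=
  esymOn Finset.univ m (x19 n)

/-- `h_m` over the variables `x₂, …, x_{ℓ-1}`: used for `h_{ℓ-j}`, the `(ℓ-j)`-th elementary
symmetric polynomial in `x₂, …, x_{ℓ-1}`. -/
noncomputable def h19 (n ℓ m : ℕ) : MvPolynomial (Fin (n + 2)) ℝ :=
  esymOn (Finset.univ.filter (fun t : Fin (n - 1) => t.1 + 2 < ℓ)) m (x19 n)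

/-- `K̃ = u + w_j + w_ℓ`. -/
noncomputable def K19 (n : ℕ) : MvPolynomial (Fin (n + 2)) ℝ :=
  X ⟨n - 1, by omega⟩ + X ⟨n, by omega⟩ + X ⟨n + 1, by omega⟩

/-- `Q_ℓ = xₙ · w_ℓ · (x_ℓ x_{ℓ+1} ⋯ x_{n-1})` (empty products being `1`). -/
noncomputable def Ql19 (n : ℕ) (hn : 4 ≤ n) (ℓ : ℕ) : MvPolynomial (Fin (n + 2)) ℝ :=
  x19 n ⟨n - 2, by omega⟩ * X ⟨n + 1, by omega⟩ *
    ∏ t ∈ Finset.univ.filter (fun t : Fin (n - 1) => ℓ ≤ t.1 + 2 ∧ t.1 + 2 < n), x19 n t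

/-- `Q_j = xₙ · w_j · (x_j x_{j+1} ⋯ x_{n-1})` (empty products being `1`). -/
noncomputable def Qj19 (n : ℕ) (hn : 4 ≤ n) (j : ℕ) : MvPolynomial (Fin (n + 2)) ℝ :=
  x19 n ⟨n - 2, by omega⟩ * X ⟨n, by omega⟩ *
    ∏ t ∈ Finset.univ.filter (fun t : Fin (n - 1) => j ≤ t.1 + 2 ∧ t.1 + 2 < n), x19 n t

/-- The `n + 2` polynomials `e'₁, …, e'_{n-1}`, `e'₁ + K̃`,
`e'_{n+2-ℓ} + e'_{n+1-ℓ} K̃ - Q_ℓ`, and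
`e'_{n+2-j} + e'_{n+1-j} K̃ - Q_ℓ h_{ℓ-j} - Q_j`. -/
noncomputable def f19 (n : ℕ) (hn : 4 ≤ n) (j ℓ : ℕ) (m : Fin (n + 2)) :
    MvPolynomial (Fin (n + 2)) ℝ :=
  if m.1 < n - 1 then e19 n (m.1 + 1)
  else if m.1 = n - 1 then e19 n 1 + K19 n
  else if m.1 = n then e19 n (n + 2 - ℓ) + e19 n (n + 1 - ℓ) * K19 n - Ql19 n hn ℓ
  else
    e19 n (n + 2 - j) + e19 n (n + 1 - j) * K19 n -
      Ql19 n hn ℓ * h19 n ℓ (ℓ - j) - Qj19 n hn j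

namespace Aux19


variable {σ : Type*} [DecidableEq σ]

lemma coeff_pderiv (m : σ) (P : MvPolynomial σ ℝ) (s : σ →₀ ℕ) :
    (pderiv m P).coeff s = ((s m + 1 : ℕ) : ℝ) * P.coeff (s + Finsupp.single m 1) := by
  induction P using MvPolynomial.induction_on' with
  | add p q hp hq => simp only [map_add, coeff_add, hp, hq]; ring
  | monomial t a =>
    rw [pderiv_monomial, coeff_monomial, coeff_monomial]
    by_cases h : t = s + Finsupp.single m 1
    · subst h
      rw [if_pos (by rw [add_tsub_cancel_right])]
      simp only [if_pos rfl, Finsupp.add_apply, Finsupp.single_eq_same]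
      push_cast
      ring
    · rw [if_neg h]
      by_cases h0 : t m = 0
      · by_cases h1 : t - Finsupp.single m 1 = s
        · rw [if_pos h1, h0]; simp
        · rw [if_neg h1]; ring
      · have hne : t - Finsupp.single m 1 ≠ s := by
          intro hs
          apply h
          rw [← hs, tsub_add_cancel_of_le
            (Finsupp.single_le_iff.2 (Nat.one_le_iff_ne_zero.2 h0))]
        rw [if_neg hne]; ring

lemma eq_C_of_pderiv_eq_zero (P : MvPolynomial σ ℝ)
    (h : ∀ m, pderiv m P = 0) : P = C (P.coeff 0) := by
  ext s
  rcases eq_or_ne s 0 with rfl | hs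
  · simp
  · rw [coeff_C, if_neg (Ne.symm hs)]
    by_contra hc
    obtain ⟨m, hm⟩ : ∃ m, s m ≠ 0 := by
      by_contra hall
      push_neg at hall
      exact hs (Finsupp.ext hall)
    have key := coeff_pderiv m P (s - Finsupp.single m 1)
    rw [h m, coeff_zero] at key
    rw [tsub_add_cancel_of_le
      (Finsupp.single_le_iff.2 (Nat.one_le_iff_ne_zero.2 hm))] at key
    rcases mul_eq_zero.1 key.symm with h' | h'
    · have : ((s - Finsupp.single m 1 : σ →₀ ℕ) m + 1 : ℕ) = 0 := Nat.cast_injective (h'.trans Nat.cast_zero.symm)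
      omega
    · exact hc h'

lemma totalDegree_pos_of_pderiv_ne_zero (P : MvPolynomial σ ℝ) (m : σ)
    (h : pderiv m P ≠ 0) : 0 < P.totalDegree := by
  obtain ⟨s, hs⟩ := MvPolynomial.ne_zero_iff.1 h
  rw [coeff_pderiv] at hs
  have h2 : P.coeff (s + Finsupp.single m 1) ≠ 0 := fun h' => hs (by rw [h', mul_zero])
  have hle := MvPolynomial.le_totalDegree (MvPolynomial.mem_support_iff.2 h2)
  have h3 : 0 < (s + Finsupp.single m 1).sum fun _ e => e := by
    rw [Finsupp.sum_add_index (by simp) (by simp), Finsupp.sum_single_index rfl]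
    omega
  omega

lemma totalDegree_pderiv_lt (P : MvPolynomial σ ℝ) (m : σ)
    (h : pderiv m P ≠ 0) : (pderiv m P).totalDegree < P.totalDegree := by
  rw [totalDegree]
  refine Finset.sup_lt_iff (by
    simpa using totalDegree_pos_of_pderiv_ne_zero P m h) |>.2 fun b hb => ?_
  have hc : (pderiv m P).coeff b ≠ 0 := MvPolynomial.mem_support_iff.1 hb
  rw [coeff_pderiv] at hc
  have h2 : P.coeff (b + Finsupp.single m 1) ≠ 0 := fun h' => hc (by rw [h', mul_zero])
  have hle := MvPolynomial.le_totalDegree (MvPolynomial.mem_support_iff.2 h2)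
  have hsum : (b + Finsupp.single m 1).sum (fun _ e => e)
      = (b.sum fun _ e => e) + 1 := by
    rw [Finsupp.sum_add_index (by simp) (by simp), Finsupp.sum_single_index rfl]
  omega

lemma pderiv_aeval {N : Type*} [Fintype N] [DecidableEq N]
    (f : N → MvPolynomial σ ℝ) (P : MvPolynomial N ℝ) (v : σ) :
    pderiv v (aeval f P) = ∑ m, aeval f (pderiv m P) * pderiv v (f m) := by
  induction P using MvPolynomial.induction_on with
  | C a => simp [algebraMap_eq]
  | add p q hp hq =>
    simp only [map_add, hp, hq, add_mul, Finset.sum_add_distrib]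
  | mul_X p i hp =>
    have key : ∀ m : N, aeval f (pderiv m (p * X i)) * pderiv v (f m)
        = aeval f (pderiv m p) * pderiv v (f m) * f i
          + (if m = i then aeval f p * pderiv v (f i) else 0) := by
      intro m
      rcases eq_or_ne m i with rfl | hmi
      · rw [pderiv_mul, map_add, map_mul, map_mul, aeval_X, pderiv_X_self, map_one,
          mul_one, if_pos rfl]
        ring
      · rw [pderiv_mul, map_add, map_mul, map_mul, aeval_X,
          pderiv_X_of_ne (Ne.symm hmi), map_zero, mul_zero, add_zero, if_neg hmi, add_zero]
        ring
    rw [Finset.sum_congr rfl fun m _ => key m, Finset.sum_add_distrib,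
      Finset.sum_ite_eq' Finset.univ i, if_pos (Finset.mem_univ i),
      ← Finset.sum_mul, ← hp, map_mul, aeval_X, pderiv_mul]

theorem algIndep_of_det_ne_zero {N : ℕ}
    (f : Fin N → MvPolynomial (Fin N) ℝ)
    (h : (Matrix.of fun (m v : Fin N) => pderiv v (f m)).det ≠ 0) :
    AlgebraicIndependent ℝ f := by
  rw [algebraicIndependent_iff]
  suffices H : ∀ d : ℕ, ∀ P : MvPolynomial (Fin N) ℝ,
      P.totalDegree ≤ d → aeval f P = 0 → P = 0 by
    intro P hP
    exact H P.totalDegree P le_rfl hP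
  intro d
  induction d with
  | zero =>
    intro P hdeg hev
    have hC : P = C (P.coeff 0) := by
      apply eq_C_of_pderiv_eq_zero
      intro m
      by_contra hne
      have := totalDegree_pos_of_pderiv_ne_zero P m hne
      omega
    rw [hC] at hev ⊢
    rw [aeval_C] at hev
    have : P.coeff 0 = 0 := by
      have := congrArg (MvPolynomial.coeff 0) hev
      simpa [Algebra.algebraMap_eq_smul_one] using hev
    rw [this, map_zero]
  | succ d ih =>
    intro P hdeg hev
    by_contra hP0
    by_cases hall : ∀ m, pderiv m P = 0
    · have hC := eq_C_of_pderiv_eq_zero P hall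
      rw [hC, aeval_C] at hev
      apply hP0
      rw [hC]
      have : P.coeff 0 = 0 := by simpa [Algebra.algebraMap_eq_smul_one] using hev
      rw [this, map_zero]
    · push_neg at hall
      obtain ⟨m₀, hm₀⟩ := hall
      set c : Fin N → MvPolynomial (Fin N) ℝ := fun m => aeval f (pderiv m P) with hc
      have hcm₀ : c m₀ ≠ 0 := by
        intro h0
        apply hm₀
        refine ih (pderiv m₀ P) ?_ h0
        have := totalDegree_pderiv_lt P m₀ hm₀
        omega
      have hker : Matrix.vecMul c (Matrix.of fun (m v : Fin N) => pderiv v (f m)) = 0 := by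
        funext v
        have := pderiv_aeval f P v
        rw [hev, map_zero] at this
        simpa [Matrix.vecMul, dotProduct, hc] using this.symm
      exact h (Matrix.exists_vecMul_eq_zero_iff.1 ⟨c, fun h0 => hcm₀ (congrFun h0 m₀), hker⟩)



/-- Leibniz rule for `pderiv` over a finite product. -/
lemma pderiv_finset_prod {σ ι : Type*} [DecidableEq σ] [DecidableEq ι] (v : σ)
    (s : Finset ι) (g : ι → MvPolynomial σ ℝ) :
    pderiv v (∏ i ∈ s, g i) = ∑ i ∈ s, (∏ j ∈ s.erase i, g j) * pderiv v (g i) := by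
  induction s using Finset.induction_on with
  | empty => simp
  | @insert a s ha ih =>
    rw [Finset.prod_insert ha, pderiv_mul, ih, Finset.sum_insert ha, Finset.erase_insert ha,
      Finset.mul_sum]
    have h2 : ∀ i ∈ s, (∏ j ∈ (insert a s).erase i, g j) * pderiv v (g i)
        = g a * ((∏ j ∈ s.erase i, g j) * pderiv v (g i)) := by
      intro i hi
      rw [Finset.erase_insert_of_ne (fun h => ha (by rw [h]; exact hi)), Finset.prod_insert
        (fun hmem => ha (Finset.mem_of_mem_erase hmem))]
      ring
    rw [Finset.sum_congr rfl h2, ← Finset.mul_sum]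
    ring

variable {n : ℕ}

def cV (n : ℕ) (t : Fin (n - 1)) : Fin (n + 2) := ⟨t.1, by have := t.isLt; omega⟩

lemma x19_eq (t : Fin (n - 1)) : x19 n t = X (cV n t) := rfl

lemma cV_inj : Function.Injective (cV n) := fun a b h =>
  Fin.ext (by simpa [cV] using congrArg Fin.val h)

lemma pderiv_prod_x19 (v : Fin (n + 2)) (hv : n - 1 ≤ v.1) (s : Finset (Fin (n - 1))) :
    pderiv v (∏ i ∈ s, x19 n i) = 0 := by
  rw [pderiv_finset_prod]
  refine Finset.sum_eq_zero fun i _ => ?_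
  rw [x19_eq, pderiv_X_of_ne (fun h => ?_), mul_zero]
  have hval := congrArg Fin.val h
  have := i.isLt
  simp only [cV] at hval
  omega

lemma pderiv_esymOn_zero (v : Fin (n + 2)) (hv : n - 1 ≤ v.1)
    (s : Finset (Fin (n - 1))) (m : ℕ) :
    pderiv v (esymOn s m (x19 n)) = 0 := by
  unfold esymOn
  rw [map_sum]
  exact Finset.sum_eq_zero fun t _ => pderiv_prod_x19 v hv t

lemma pderiv_e19_zero (v : Fin (n + 2)) (hv : n - 1 ≤ v.1) (m : ℕ) :
    pderiv v (e19 n m) = 0 := pderiv_esymOn_zero v hv _ m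

lemma pderiv_h19_zero (v : Fin (n + 2)) (hv : n - 1 ≤ v.1) (ℓ m : ℕ) :
    pderiv v (h19 n ℓ m) = 0 := pderiv_esymOn_zero v hv _ m

lemma pderiv_e19 (a : Fin (n - 1)) (m : ℕ) :
    pderiv (cV n a) (e19 n (m + 1)) = esymOn (Finset.univ.erase a) m (x19 n) := by
  unfold e19 esymOn
  rw [map_sum]
  have step : ∀ t ∈ Finset.powersetCard (m + 1) (Finset.univ : Finset (Fin (n - 1))),
      pderiv (cV n a) (∏ i ∈ t, x19 n i)
        = if a ∈ t then ∏ i ∈ t.erase a, x19 n i else 0 := by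
    intro t _
    rw [pderiv_finset_prod]
    by_cases hat : a ∈ t
    · rw [if_pos hat, Finset.sum_eq_single_of_mem a hat]
      · rw [x19_eq, pderiv_X_self, mul_one]
      · intro i _ hia
        rw [x19_eq, pderiv_X_of_ne (fun h => hia (cV_inj h)), mul_zero]
    · rw [if_neg hat]
      exact Finset.sum_eq_zero fun i hi => by
        rw [x19_eq, pderiv_X_of_ne (fun h => hat (by rw [← cV_inj h]; exact hi)), mul_zero]
  rw [Finset.sum_congr rfl step, Finset.sum_ite, Finset.sum_const_zero, add_zero]
  refine Finset.sum_nbij' (fun t => t.erase a) (fun t => insert a t) ?_ ?_ ?_ ?_ ?_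
  · intro t ht
    rw [Finset.mem_filter, Finset.mem_powersetCard] at ht
    rw [Finset.mem_powersetCard]
    exact ⟨Finset.erase_subset_erase a ht.1.1,
      by rw [Finset.card_erase_of_mem ht.2, ht.1.2]; omega⟩
  · intro t ht
    rw [Finset.mem_powersetCard] at ht
    have hat : a ∉ t := fun h => Finset.notMem_erase a _ (ht.1 h)
    rw [Finset.mem_filter, Finset.mem_powersetCard]
    exact ⟨⟨Finset.subset_univ _, by rw [Finset.card_insert_of_notMem hat, ht.2]⟩,
      Finset.mem_insert_self a t⟩
  · intro t ht
    rw [Finset.mem_filter] at ht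
    exact Finset.insert_erase ht.2
  · intro t ht
    rw [Finset.mem_powersetCard] at ht
    exact Finset.erase_insert (fun h => Finset.notMem_erase a _ (ht.1 h))
  · intro t _
    rfl


/-- The Vandermonde-type determinant of elementary symmetric values is nonzero. -/
lemma det_esymOn_real {k : ℕ} (t : Fin k → ℝ) (ht : Function.Injective t) :
    (Matrix.of fun m v : Fin k => esymOn (Finset.univ.erase v) m.1 t).det ≠ 0 := by
  rcases Nat.eq_zero_or_pos k with rfl | hk
  · rw [Matrix.det_fin_zero]; exact one_ne_zero
  intro hdet
  obtain ⟨c, hc0, hMc⟩ := Matrix.exists_mulVec_eq_zero_iff.2 hdet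
  set Q : Polynomial ℝ := ∑ v : Fin k, Polynomial.C (c v) *
      ∏ i ∈ Finset.univ.erase v, (Polynomial.X + Polynomial.C (t i)) with hQdef
  have hcard : ∀ v : Fin k, #(Finset.univ.erase v) = k - 1 := fun v => by
    rw [Finset.card_erase_of_mem (Finset.mem_univ v), Finset.card_univ, Fintype.card_fin]
  have hdeg : ∀ v : Fin k,
      (∏ i ∈ Finset.univ.erase v, (Polynomial.X + Polynomial.C (t i))).natDegree = k - 1 := by
    intro v
    rw [Polynomial.natDegree_prod _ _ (fun i _ => Polynomial.X_add_C_ne_zero (t i))]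
    rw [Finset.sum_congr rfl (fun i _ => Polynomial.natDegree_X_add_C (t i)),
      Finset.sum_const, smul_eq_mul, mul_one, hcard]
  have hQ : Q = 0 := by
    apply Polynomial.ext
    intro d
    rw [Polynomial.coeff_zero, hQdef, Polynomial.finset_sum_coeff]
    by_cases hd : d ≤ k - 1
    · have key : ∀ v : Fin k,
          (Polynomial.C (c v) *
            ∏ i ∈ Finset.univ.erase v, (Polynomial.X + Polynomial.C (t i))).coeff d
          = esymOn (Finset.univ.erase v) (k - 1 - d) t * c v := by
        intro v
        rw [Polynomial.coeff_C_mul, Finset.prod_X_add_C_coeff _ _ (by rw [hcard]; exact hd),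
          hcard]
        rw [mul_comm]
        rfl
      rw [Finset.sum_congr rfl fun v _ => key v]
      have := congrFun hMc ⟨k - 1 - d, by omega⟩
      simpa [Matrix.mulVec, dotProduct] using this
    · refine Finset.sum_eq_zero fun v _ => ?_
      rw [Polynomial.coeff_C_mul, Polynomial.coeff_eq_zero_of_natDegree_lt (by rw [hdeg]; omega),
        mul_zero]
  apply hc0
  funext w
  have hev := congrArg (Polynomial.eval (-(t w))) hQ
  rw [hQdef, Polynomial.eval_zero, Polynomial.eval_finset_sum] at hev
  have hterm : ∀ v : Fin k,
      Polynomial.eval (-(t w)) (Polynomial.C (c v) *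
        ∏ i ∈ Finset.univ.erase v, (Polynomial.X + Polynomial.C (t i)))
      = c v * ∏ i ∈ Finset.univ.erase v, (-(t w) + t i) := by
    intro v
    rw [Polynomial.eval_mul, Polynomial.eval_C, Polynomial.eval_prod]
    exact congrArg _ (Finset.prod_congr rfl fun i _ => by
      rw [Polynomial.eval_add, Polynomial.eval_X, Polynomial.eval_C])
  rw [Finset.sum_congr rfl fun v _ => hterm v, Finset.sum_eq_single w] at hev
  · have hprod : ∏ i ∈ Finset.univ.erase w, (-(t w) + t i) ≠ 0 := by
      rw [Finset.prod_ne_zero_iff]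
      intro i hi h0
      exact (Finset.ne_of_mem_erase hi) (ht (by linarith))
    rcases mul_eq_zero.1 hev.symm.symm with h' | h'
    · exact h'
    · exact absurd h' hprod
  · intro v _ hvw
    rw [Finset.prod_eq_zero (Finset.mem_erase.2 ⟨hvw.symm, Finset.mem_univ w⟩)
      (by ring), mul_zero]
  · intro h; exact absurd (Finset.mem_univ w) h

lemma eval_esymOn (p : Fin (n + 2) → ℝ) (s : Finset (Fin (n - 1))) (m : ℕ) :
    eval p (esymOn s m (x19 n)) = esymOn s m (fun i => p (cV n i)) := by
  unfold esymOn
  rw [map_sum]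
  exact Finset.sum_congr rfl fun u _ => by
    rw [map_prod]
    exact Finset.prod_congr rfl fun i _ => by rw [x19_eq, eval_X]

section Entries

variable (n : ℕ)

def vU : Fin (n + 2) := ⟨n - 1, by omega⟩
def vJ : Fin (n + 2) := ⟨n, by omega⟩
def vL : Fin (n + 2) := ⟨n + 1, by omega⟩

@[simp] lemma vU_val : (vU n).1 = n - 1 := rfl
@[simp] lemma vJ_val : (vJ n).1 = n := rfl
@[simp] lemma vL_val : (vL n).1 = n + 1 := rfl

lemma pderiv_X_mk (v : Fin (n + 2)) (a : ℕ) (h : a < n + 2) :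
    pderiv v (X (⟨a, h⟩ : Fin (n + 2)) : MvPolynomial (Fin (n + 2)) ℝ)
      = if v.1 = a then 1 else 0 := by
  rcases eq_or_ne v.1 a with hv | hv
  · rw [if_pos hv]
    have hva : v = ⟨a, h⟩ := Fin.ext hv
    rw [hva, pderiv_X_self]
  · rw [if_neg hv]
    exact pderiv_X_of_ne (fun hEq => hv (by rw [← hEq]))

lemma pderiv_K (v : Fin (n + 2)) :
    pderiv v (K19 n) = ((if v.1 = n - 1 then 1 else 0) + (if v.1 = n then 1 else 0)
      + (if v.1 = n + 1 then 1 else 0) : MvPolynomial (Fin (n + 2)) ℝ) := by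
  unfold K19
  rw [map_add, map_add, pderiv_X_mk, pderiv_X_mk, pderiv_X_mk]

/-- `Q_ℓ` without the `w_ℓ` factor. -/
noncomputable def Pl19 (hn : 4 ≤ n) (ℓ : ℕ) : MvPolynomial (Fin (n + 2)) ℝ :=
  x19 n ⟨n - 2, by omega⟩ *
    ∏ t ∈ Finset.univ.filter (fun t : Fin (n - 1) => ℓ ≤ t.1 + 2 ∧ t.1 + 2 < n), x19 n t

/-- `Q_j` without the `w_j` factor. -/
noncomputable def Pj19 (hn : 4 ≤ n) (j : ℕ) : MvPolynomial (Fin (n + 2)) ℝ :=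
  x19 n ⟨n - 2, by omega⟩ *
    ∏ t ∈ Finset.univ.filter (fun t : Fin (n - 1) => j ≤ t.1 + 2 ∧ t.1 + 2 < n), x19 n t

variable {n}

lemma pderiv_x19_lo (hn : 4 ≤ n) (v : Fin (n + 2)) (hv : n - 1 ≤ v.1) :
    pderiv v (x19 n ⟨n - 2, by omega⟩) = 0 := by
  rw [x19_eq]
  refine pderiv_X_of_ne fun hEq => ?_
  have := congrArg Fin.val hEq
  simp only [cV] at this
  omega

lemma pderiv_Ql (hn : 4 ≤ n) (ℓ : ℕ) (v : Fin (n + 2)) (hv : n - 1 ≤ v.1) :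
    pderiv v (Ql19 n hn ℓ) = (if v.1 = n + 1 then 1 else 0) * Pl19 n hn ℓ := by
  unfold Ql19 Pl19
  rw [pderiv_mul, pderiv_mul, pderiv_prod_x19 _ hv, mul_zero, add_zero, pderiv_X_mk,
    pderiv_x19_lo hn v hv]
  ring

lemma pderiv_Qj (hn : 4 ≤ n) (j : ℕ) (v : Fin (n + 2)) (hv : n - 1 ≤ v.1) :
    pderiv v (Qj19 n hn j) = (if v.1 = n then 1 else 0) * Pj19 n hn j := by
  unfold Qj19 Pj19
  rw [pderiv_mul, pderiv_mul, pderiv_prod_x19 _ hv, mul_zero, add_zero, pderiv_X_mk,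
    pderiv_x19_lo hn v hv]
  ring

lemma pderiv_row0 (v : Fin (n + 2)) (hv : n - 1 ≤ v.1) :
    pderiv v (e19 n 1 + K19 n) = ((if v.1 = n - 1 then 1 else 0) + (if v.1 = n then 1 else 0)
      + (if v.1 = n + 1 then 1 else 0) : MvPolynomial (Fin (n + 2)) ℝ) := by
  rw [map_add, pderiv_e19_zero v hv, zero_add, pderiv_K]

lemma pderiv_row1 (hn : 4 ≤ n) (ℓ : ℕ) (v : Fin (n + 2)) (hv : n - 1 ≤ v.1) :
    pderiv v (e19 n (n + 2 - ℓ) + e19 n (n + 1 - ℓ) * K19 n - Ql19 n hn ℓ)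
      = e19 n (n + 1 - ℓ) * ((if v.1 = n - 1 then 1 else 0) + (if v.1 = n then 1 else 0)
          + (if v.1 = n + 1 then 1 else 0))
        - (if v.1 = n + 1 then 1 else 0) * Pl19 n hn ℓ := by
  rw [map_sub, map_add, pderiv_e19_zero v hv, pderiv_mul, pderiv_e19_zero v hv, pderiv_K,
    pderiv_Ql hn ℓ v hv]
  ring

lemma pderiv_row2 (hn : 4 ≤ n) (j ℓ : ℕ) (v : Fin (n + 2)) (hv : n - 1 ≤ v.1) :
    pderiv v (e19 n (n + 2 - j) + e19 n (n + 1 - j) * K19 n -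
        Ql19 n hn ℓ * h19 n ℓ (ℓ - j) - Qj19 n hn j)
      = e19 n (n + 1 - j) * ((if v.1 = n - 1 then 1 else 0) + (if v.1 = n then 1 else 0)
          + (if v.1 = n + 1 then 1 else 0))
        - (if v.1 = n + 1 then 1 else 0) * Pl19 n hn ℓ * h19 n ℓ (ℓ - j)
        - (if v.1 = n then 1 else 0) * Pj19 n hn j := by
  rw [map_sub, map_sub, map_add, pderiv_e19_zero v hv, pderiv_mul, pderiv_e19_zero v hv,
    pderiv_K, pderiv_mul, pderiv_h19_zero v hv, pderiv_Ql hn ℓ v hv, pderiv_Qj hn j v hv]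
  ring

lemma f19_row0 (hn : 4 ≤ n) (j ℓ : ℕ) (m : Fin (n + 2)) (h : m.1 = n - 1) :
    f19 n hn j ℓ m = e19 n 1 + K19 n := by
  unfold f19
  rw [h, if_neg (by omega), if_pos rfl]

lemma f19_row1 (hn : 4 ≤ n) (j ℓ : ℕ) (m : Fin (n + 2)) (h : m.1 = n) :
    f19 n hn j ℓ m = e19 n (n + 2 - ℓ) + e19 n (n + 1 - ℓ) * K19 n - Ql19 n hn ℓ := by
  unfold f19
  rw [h, if_neg (by omega), if_neg (by omega), if_pos rfl]

lemma f19_row2 (hn : 4 ≤ n) (j ℓ : ℕ) (m : Fin (n + 2)) (h : m.1 = n + 1) :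
    f19 n hn j ℓ m = e19 n (n + 2 - j) + e19 n (n + 1 - j) * K19 n -
      Ql19 n hn ℓ * h19 n ℓ (ℓ - j) - Qj19 n hn j := by
  unfold f19
  rw [h, if_neg (by omega), if_neg (by omega), if_neg (by omega)]

lemma Pl19_ne_zero (hn : 4 ≤ n) (ℓ : ℕ) : Pl19 n hn ℓ ≠ 0 := by
  unfold Pl19
  refine mul_ne_zero (by rw [x19_eq]; exact X_ne_zero _) ?_
  rw [Finset.prod_ne_zero_iff]
  intro t _
  rw [x19_eq]
  exact X_ne_zero _

lemma Pj19_ne_zero (hn : 4 ≤ n) (j : ℕ) : Pj19 n hn j ≠ 0 := by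
  unfold Pj19
  refine mul_ne_zero (by rw [x19_eq]; exact X_ne_zero _) ?_
  rw [Finset.prod_ne_zero_iff]
  intro t _
  rw [x19_eq]
  exact X_ne_zero _

end Entries

section Assemble

def eqv (n : ℕ) (hn : 4 ≤ n) : Fin (n - 1) ⊕ Fin 3 ≃ Fin (n + 2) :=
  finSumFinEquiv.trans (finCongr (by omega))

variable {n : ℕ} (hn : 4 ≤ n)

lemma eqv_inl (a : Fin (n - 1)) : eqv n hn (Sum.inl a) = cV n a := by
  apply Fin.ext
  simp [eqv, cV]

lemma eqv_inr_val (r : Fin 3) : (eqv n hn (Sum.inr r)).1 = n - 1 + r.1 := by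
  simp [eqv]

lemma eqv_inr0 : eqv n hn (Sum.inr 0) = vU n := by
  apply Fin.ext
  rw [eqv_inr_val, vU_val]
  norm_num

lemma eqv_inr1 : eqv n hn (Sum.inr 1) = vJ n := by
  apply Fin.ext
  rw [eqv_inr_val, vJ_val]
  have h1 : ((1 : Fin 3) : ℕ) = 1 := rfl
  omega

lemma eqv_inr2 : eqv n hn (Sum.inr 2) = vL n := by
  apply Fin.ext
  rw [eqv_inr_val, vL_val]
  have h2 : ((2 : Fin 3) : ℕ) = 2 := rfl
  omega

theorem det19_ne_zero (n j ℓ : ℕ) (hn : 4 ≤ n) (hj : 3 ≤ j) (hjl : j < ℓ) (hln : ℓ ≤ n) :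
    (Matrix.of fun (m v : Fin (n + 2)) => pderiv v (f19 n hn j ℓ m)).det ≠ 0 := by
  set J : Matrix (Fin (n + 2)) (Fin (n + 2)) (MvPolynomial (Fin (n + 2)) ℝ) :=
    Matrix.of fun (m v : Fin (n + 2)) => pderiv v (f19 n hn j ℓ m) with hJ
  rw [← Matrix.det_submatrix_equiv_self (eqv n hn) J]
  set M := J.submatrix (eqv n hn) (eqv n hn) with hMdef
  have hrow0 : ∀ a : Fin (n - 1),
      f19 n hn j ℓ (eqv n hn (Sum.inl a)) = e19 n (a.1 + 1) := by
    intro a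
    rw [eqv_inl]
    unfold f19
    rw [if_pos (show (cV n a).1 < n - 1 from a.isLt)]
    rfl
  have h12 : M.toBlocks₁₂ = 0 := by
    refine Matrix.ext_iff.1 fun a r => ?_
    show pderiv (eqv n hn (Sum.inr r)) (f19 n hn j ℓ (eqv n hn (Sum.inl a))) = 0
    rw [hrow0 a]
    exact pderiv_e19_zero _ (by rw [eqv_inr_val]; omega) _
  have hdetM : M.det = M.toBlocks₁₁.det * M.toBlocks₂₂.det := by
    conv_lhs => rw [← Matrix.fromBlocks_toBlocks M, h12]
    exact Matrix.det_fromBlocks_zero₁₂ _ _ _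
  rw [hdetM]
  refine mul_ne_zero ?_ ?_
  · -- the elementary-symmetric block
    set p : Fin (n + 2) → ℝ := fun i => (i.1 : ℝ) with hp
    have hB : M.toBlocks₁₁.map (eval p)
        = Matrix.of fun m v : Fin (n - 1) =>
            esymOn (Finset.univ.erase v) m.1 (fun i : Fin (n - 1) => (i.1 : ℝ)) := by
      ext a v
      show eval p (M.toBlocks₁₁ a v) = _
      have hentry : M.toBlocks₁₁ a v = esymOn (Finset.univ.erase v) a.1 (x19 n) := by
        show pderiv (eqv n hn (Sum.inl v)) (f19 n hn j ℓ (eqv n hn (Sum.inl a))) = _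
        rw [hrow0 a, eqv_inl, pderiv_e19]
      rw [hentry, eval_esymOn]
      rfl
    intro h0
    refine det_esymOn_real (fun i : Fin (n - 1) => (i.1 : ℝ))
      (fun a b hab => Fin.ext (Nat.cast_injective hab)) ?_
    calc (Matrix.of fun m v : Fin (n - 1) =>
            esymOn (Finset.univ.erase v) m.1 (fun i : Fin (n - 1) => (i.1 : ℝ))).det
        = (M.toBlocks₁₁.map (eval p)).det := by rw [hB]
      _ = eval p M.toBlocks₁₁.det := ((eval p : MvPolynomial (Fin (n + 2)) ℝ →+* ℝ).map_det _).symm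
      _ = 0 := by rw [h0, map_zero]
  · -- the 3×3 block
    have hE : ∀ r s : Fin 3, M.toBlocks₂₂ r s
        = pderiv (eqv n hn (Sum.inr s)) (f19 n hn j ℓ (eqv n hn (Sum.inr r))) :=
      fun r s => rfl
    have hvU : n - 1 ≤ (vU n).1 := le_of_eq rfl
    have hvJ : n - 1 ≤ (vJ n).1 := by rw [vJ_val]; omega
    have hvL : n - 1 ≤ (vL n).1 := by rw [vL_val]; omega
    have E00 : M.toBlocks₂₂ 0 0 = 1 := by
      rw [hE, eqv_inr0, f19_row0 hn j ℓ _ (vU_val n), pderiv_row0 _ hvU, vU_val,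
        if_pos rfl, if_neg (by omega), if_neg (by omega)]
      ring
    have E01 : M.toBlocks₂₂ 0 1 = 1 := by
      rw [hE, eqv_inr0, eqv_inr1, f19_row0 hn j ℓ _ (vU_val n), pderiv_row0 _ hvJ, vJ_val,
        if_neg (by omega), if_pos rfl, if_neg (by omega)]
      ring
    have E02 : M.toBlocks₂₂ 0 2 = 1 := by
      rw [hE, eqv_inr0, eqv_inr2, f19_row0 hn j ℓ _ (vU_val n), pderiv_row0 _ hvL, vL_val,
        if_neg (by omega), if_neg (by omega), if_pos rfl]
      ring
    have E10 : M.toBlocks₂₂ 1 0 = e19 n (n + 1 - ℓ) := by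
      rw [hE, eqv_inr1, eqv_inr0, f19_row1 hn j ℓ _ (vJ_val n), pderiv_row1 hn ℓ _ hvU, vU_val,
        if_pos rfl, if_neg (by omega), if_neg (by omega)]
      ring
    have E11 : M.toBlocks₂₂ 1 1 = e19 n (n + 1 - ℓ) := by
      rw [hE, eqv_inr1, f19_row1 hn j ℓ _ (vJ_val n), pderiv_row1 hn ℓ _ hvJ, vJ_val,
        if_neg (by omega), if_pos rfl, if_neg (by omega)]
      ring
    have E12 : M.toBlocks₂₂ 1 2 = e19 n (n + 1 - ℓ) - Pl19 n hn ℓ := by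
      rw [hE, eqv_inr1, eqv_inr2, f19_row1 hn j ℓ _ (vJ_val n), pderiv_row1 hn ℓ _ hvL, vL_val,
        if_neg (by omega), if_neg (by omega), if_pos rfl]
      ring
    have E20 : M.toBlocks₂₂ 2 0 = e19 n (n + 1 - j) := by
      rw [hE, eqv_inr2, eqv_inr0, f19_row2 hn j ℓ _ (vL_val n), pderiv_row2 hn j ℓ _ hvU, vU_val,
        if_pos rfl, if_neg (by omega), if_neg (by omega)]
      ring
    have E21 : M.toBlocks₂₂ 2 1 = e19 n (n + 1 - j) - Pj19 n hn j := by
      rw [hE, eqv_inr2, eqv_inr1, f19_row2 hn j ℓ _ (vL_val n), pderiv_row2 hn j ℓ _ hvJ, vJ_val,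
        if_neg (by omega), if_pos rfl, if_neg (by omega)]
      ring
    have E22 : M.toBlocks₂₂ 2 2 = e19 n (n + 1 - j) - Pl19 n hn ℓ * h19 n ℓ (ℓ - j) := by
      rw [hE, eqv_inr2, f19_row2 hn j ℓ _ (vL_val n), pderiv_row2 hn j ℓ _ hvL, vL_val,
        if_neg (by omega), if_neg (by omega), if_pos rfl]
      ring
    have hdet3 : M.toBlocks₂₂.det = -(Pl19 n hn ℓ * Pj19 n hn j) := by
      rw [Matrix.det_fin_three, E00, E01, E02, E10, E11, E12, E20, E21, E22]
      ring
    rw [hdet3]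
    exact neg_ne_zero.2 (mul_ne_zero (Pl19_ne_zero hn ℓ) (Pj19_ne_zero hn j))

end Assemble

end Aux19

/-- For the cycle model with two added outgoing edges `1 → j` and `1 → ℓ` (rates `w_j`,
`w_ℓ`), the `n + 2` listed coefficients have nonzero Jacobian determinant with respect to
the `n + 2` variables; equivalently, they are algebraically independent over `ℝ`. -/
theorem stmt19 (n j ℓ : ℕ) (hn : 4 ≤ n) (hj : 3 ≤ j) (hjl : j < ℓ) (hln : ℓ ≤ n) :
    (Matrix.of fun (m v : Fin (n + 2)) => pderiv v (f19 n hn j ℓ m)).det ≠ 0 ∧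
    AlgebraicIndependent ℝ (f19 n hn j ℓ) := by
  have hdet := Aux19.det19_ne_zero n j ℓ hn hj hjl hln
  exact ⟨hdet, Aux19.algIndep_of_det_ne_zero _ hdet⟩
end
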